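/- arXiv:1605.03894 — 7 statements merged into one kernel-verified Lean document; each statement's English description precedes it below -/
import Mathlib

section
/- Let p ≥ 2 be an integer and let A and C be two N×N Hermitian matrices such that C has rank at most r. Then |tr((A+C)^p) - tr(A^p) - tr(C^p)| ≤ 2^p · r · max_{1≤k≤p-1} ‖A‖^k ‖C‖^{p-k}, where ‖·‖ denotes the operator norm. -/
open Matrix

/-- Operator (spectral) norm of a complex matrix. -/
noncomputable def opNorm {N : ℕ} (M : Matrix (Fin N) (Fin N) ℂ) : ℝ :=
  ‖Matrix.toEuclideanCLM (𝕜 := ℂ) M‖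

lemma opNorm_nonneg {N : ℕ} (M : Matrix (Fin N) (Fin N) ℂ) : 0 ≤ opNorm M := norm_nonneg _

lemma opNorm_mul_le {N : ℕ} (M M' : Matrix (Fin N) (Fin N) ℂ) :
    opNorm (M * M') ≤ opNorm M * opNorm M' := by
  unfold opNorm; rw [_root_.map_mul]; exact norm_mul_le _ _

lemma opNorm_one_le {N : ℕ} : opNorm (1 : Matrix (Fin N) (Fin N) ℂ) ≤ 1 := by
  unfold opNorm
  rw [_root_.map_one, ContinuousLinearMap.one_def]
  exact ContinuousLinearMap.norm_id_le

lemma opNorm_list_prod_le {N : ℕ} (l : List (Matrix (Fin N) (Fin N) ℂ)) :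
    opNorm l.prod ≤ (l.map opNorm).prod := by
  induction l with
  | nil => simpa using opNorm_one_le
  | cons a l ih =>
      simp only [List.prod_cons, List.map_cons]
      calc opNorm (a * l.prod) ≤ opNorm a * opNorm l.prod := opNorm_mul_le _ _
        _ ≤ opNorm a * (l.map opNorm).prod :=
          mul_le_mul_of_nonneg_left ih (opNorm_nonneg a)

-- eigenvalue bound
lemma eig_le {N : ℕ} {C : Matrix (Fin N) (Fin N) ℂ} (hC : C.IsHermitian) (i : Fin N) :
    |hC.eigenvalues i| ≤ opNorm C := by
  have hv : ‖hC.eigenvectorBasis i‖ = 1 := hC.eigenvectorBasis.orthonormal.1 i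
  have hmv := hC.mulVec_eigenvectorBasis i
  have h1 : Matrix.toEuclideanCLM (𝕜 := ℂ) C (hC.eigenvectorBasis i)
      = (hC.eigenvalues i : ℝ) • (hC.eigenvectorBasis i) := by
    apply (WithLp.equiv 2 _).injective
    simp only [WithLp.equiv_apply, ofLp_toEuclideanCLM]
    rw [hmv]
    rfl
  have h2 := (Matrix.toEuclideanCLM (𝕜 := ℂ) C).le_opNorm (hC.eigenvectorBasis i)
  rw [h1, norm_smul, hv, mul_one, Real.norm_eq_abs] at h2
  rw [mul_one] at h2
  exact h2


lemma diag_entry_le {N : ℕ} (M U : Matrix (Fin N) (Fin N) ℂ) (v : EuclideanSpace ℂ (Fin N))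
    (hv : ‖v‖ = 1) (i : Fin N) (hcol : ∀ j, U j i = v j) :
    ‖(star U * M * U) i i‖ ≤ opNorm M := by
  have hX : (star U * M * U) i i =
      inner (𝕜 := ℂ) v (Matrix.toEuclideanCLM (𝕜 := ℂ) M v) := by
    rw [EuclideanSpace.inner_eq_star_dotProduct]
    simp only [ofLp_toEuclideanCLM]
    simp only [Matrix.mul_apply, Matrix.star_apply, dotProduct, Matrix.mulVec,
      Pi.star_apply, hcol]
    simp only [Finset.sum_mul, Finset.mul_sum]
    rw [Finset.sum_comm]
    refine Finset.sum_congr rfl fun k _ => Finset.sum_congr rfl fun j _ => ?_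
    show star (v k) * M k j * v j = M k j * v j * star (v k)
    ring
  rw [hX]
  calc ‖inner (𝕜 := ℂ) v (Matrix.toEuclideanCLM (𝕜 := ℂ) M v)‖
      ≤ ‖v‖ * ‖Matrix.toEuclideanCLM (𝕜 := ℂ) M v‖ := norm_inner_le_norm _ _
    _ ≤ ‖v‖ * (opNorm M * ‖v‖) :=
        mul_le_mul_of_nonneg_left ((Matrix.toEuclideanCLM (𝕜 := ℂ) M).le_opNorm v)
          (norm_nonneg v)
    _ = opNorm M := by rw [hv]; ring

lemma norm_trace_mul_le {N r : ℕ} {C : Matrix (Fin N) (Fin N) ℂ} (hC : C.IsHermitian)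
    (hrank : C.rank ≤ r) (M : Matrix (Fin N) (Fin N) ℂ) :
    ‖(C * M).trace‖ ≤ r * (opNorm C * opNorm M) := by
  classical
  set U : Matrix (Fin N) (Fin N) ℂ := (hC.eigenvectorUnitary : Matrix (Fin N) (Fin N) ℂ) with hU
  set X : Matrix (Fin N) (Fin N) ℂ := star U * M * U with hX
  have htr : (C * M).trace = ∑ i, (RCLike.ofReal (hC.eigenvalues i) : ℂ) * X i i := by
    conv_lhs => rw [hC.spectral_theorem]
    simp only [Unitary.conjStarAlgAut_apply, Unitary.coe_star, ← hU]
    have e1 : (U * Matrix.diagonal (RCLike.ofReal ∘ hC.eigenvalues) * star U) * M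
        = U * (Matrix.diagonal (RCLike.ofReal ∘ hC.eigenvalues) * (star U * M)) := by
      simp only [Matrix.mul_assoc]
    rw [e1, Matrix.trace_mul_comm]
    have e2 : Matrix.diagonal (RCLike.ofReal ∘ hC.eigenvalues) * (star U * M) * U
        = Matrix.diagonal (RCLike.ofReal ∘ hC.eigenvalues) * X := by
      simp only [hX, Matrix.mul_assoc]
    rw [e2]
    simp [Matrix.trace, Matrix.diag, Matrix.diagonal_mul]
  rw [htr]
  have hterm : ∀ i, ‖(RCLike.ofReal (hC.eigenvalues i) : ℂ) * X i i‖
      ≤ opNorm C * opNorm M := by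
    intro i
    rw [norm_mul, RCLike.norm_ofReal]
    have h1 := eig_le hC i
    have h2 : ‖X i i‖ ≤ opNorm M := by
      refine diag_entry_le M U (hC.eigenvectorBasis i)
        (hC.eigenvectorBasis.orthonormal.1 i) i fun j => ?_
      simp [hU]
    exact mul_le_mul h1 h2 (norm_nonneg _) (opNorm_nonneg _)
  set s : Finset (Fin N) := Finset.univ.filter (fun i => hC.eigenvalues i ≠ 0) with hs
  have hsum : ∑ i, ‖(RCLike.ofReal (hC.eigenvalues i) : ℂ) * X i i‖
      = ∑ i ∈ s, ‖(RCLike.ofReal (hC.eigenvalues i) : ℂ) * X i i‖ := by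
    refine (Finset.sum_filter_of_ne ?_).symm
    intro i _ hne
    intro h0
    apply hne
    simp [h0]
  have hcard : s.card ≤ r := by
    have h := hC.rank_eq_card_non_zero_eigs
    rw [Fintype.card_subtype] at h
    have h2 : C.rank = s.card := by rw [h, hs]
    omega
  calc ‖∑ i, (RCLike.ofReal (hC.eigenvalues i) : ℂ) * X i i‖
      ≤ ∑ i, ‖(RCLike.ofReal (hC.eigenvalues i) : ℂ) * X i i‖ := norm_sum_le _ _
    _ = ∑ i ∈ s, ‖(RCLike.ofReal (hC.eigenvalues i) : ℂ) * X i i‖ := hsum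
    _ ≤ s.card * (opNorm C * opNorm M) := by
        rw [← nsmul_eq_mul]
        exact Finset.sum_le_card_nsmul s _ _ fun i _ => hterm i
    _ ≤ r * (opNorm C * opNorm M) := by
        have h0 : (0:ℝ) ≤ opNorm C * opNorm M :=
          mul_nonneg (opNorm_nonneg _) (opNorm_nonneg _)
        exact mul_le_mul_of_nonneg_right (by exact_mod_cast hcard) h0

noncomputable def wrd {N : ℕ} (A C : Matrix (Fin N) (Fin N) ℂ) {n : ℕ} (f : Fin n → Bool) :
    Matrix (Fin N) (Fin N) ℂ :=
  (List.ofFn (fun i => if f i then A else C)).prod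

lemma add_pow_expand {N : ℕ} (A C : Matrix (Fin N) (Fin N) ℂ) (n : ℕ) :
    (A + C) ^ n = ∑ f : Fin n → Bool, wrd A C f := by
  induction n with
  | zero => simp [wrd]
  | succ n ih =>
      have e := Fin.consEquiv (fun _ : Fin (n + 1) => Bool)
      rw [pow_succ', ih]
      rw [← Equiv.sum_comp (Fin.consEquiv (fun _ : Fin (n + 1) => Bool))
        (fun f => wrd A C f), Fintype.sum_prod_type]
      have hw : ∀ (b : Bool) (g : Fin n → Bool),
          wrd A C ((Fin.consEquiv (fun _ : Fin (n + 1) => Bool)) (b, g))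
            = (if b then A else C) * wrd A C g := by
        intro b g
        simp [wrd, Fin.consEquiv, List.ofFn_succ, List.prod_cons]
      simp only [hw]
      rw [Fintype.sum_bool]
      simp only [Bool.false_eq_true, if_true, if_false, ← Finset.mul_sum]
      rw [add_mul]

lemma word_trace_bound {N r p : ℕ} (A C : Matrix (Fin N) (Fin N) ℂ) (hC : C.IsHermitian)
    (hrank : C.rank ≤ r) (f : Fin p → Bool) (i0 : Fin p) (hi0 : f i0 = false) :
    ‖(wrd A C f).trace‖ ≤
      r * (opNorm A ^ (Finset.univ.filter (fun i => f i = true)).card *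
        opNorm C ^ (Finset.univ.filter (fun i => ¬ f i = true)).card) := by
  classical
  set L : List (Matrix (Fin N) (Fin N) ℂ) := List.ofFn (fun i => if f i then A else C) with hL
  have hmem : C ∈ L := by
    rw [hL, List.mem_ofFn]
    exact ⟨i0, by simp [hi0]⟩
  obtain ⟨s, t, hst⟩ := List.append_of_mem hmem
  have hprod : wrd A C f = s.prod * (C * t.prod) := by
    rw [wrd, ← hL, hst, List.prod_append, List.prod_cons]
  have htr : (wrd A C f).trace = (C * (t.prod * s.prod)).trace := by
    rw [hprod, Matrix.trace_mul_comm, Matrix.mul_assoc]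
  have hmapnn : ∀ (l : List (Matrix (Fin N) (Fin N) ℂ)), 0 ≤ (l.map opNorm).prod := by
    intro l
    apply List.prod_nonneg
    intro a ha
    obtain ⟨b, _, rfl⟩ := List.mem_map.1 ha
    exact opNorm_nonneg b
  have hbound : ‖(wrd A C f).trace‖ ≤ r * (opNorm C * ((t.map opNorm).prod * (s.map opNorm).prod)) := by
    rw [htr]
    refine le_trans (norm_trace_mul_le hC hrank _) ?_
    refine mul_le_mul_of_nonneg_left ?_ (Nat.cast_nonneg r)
    refine mul_le_mul_of_nonneg_left ?_ (opNorm_nonneg _)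
    calc opNorm (t.prod * s.prod) ≤ opNorm t.prod * opNorm s.prod := opNorm_mul_le _ _
      _ ≤ (t.map opNorm).prod * (s.map opNorm).prod :=
          mul_le_mul (opNorm_list_prod_le t) (opNorm_list_prod_le s)
            (opNorm_nonneg _) (hmapnn t)
  have hLmap : opNorm C * ((t.map opNorm).prod * (s.map opNorm).prod) = (L.map opNorm).prod := by
    rw [hst, List.map_append, List.map_cons, List.prod_append, List.prod_cons]
    ring
  have hfin : (L.map opNorm).prod =
      opNorm A ^ (Finset.univ.filter (fun i => f i = true)).card *
        opNorm C ^ (Finset.univ.filter (fun i => ¬ f i = true)).card := by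
    rw [hL, List.map_ofFn, List.prod_ofFn]
    have : ∀ i, opNorm ((fun i => if f i then A else C) i)
        = (if f i then opNorm A else opNorm C) := by
      intro i
      exact apply_ite opNorm (f i = true) A C
    simp only [Function.comp, this]
    rw [Finset.prod_ite, Finset.prod_const, Finset.prod_const]
  rw [hLmap, hfin] at hbound
  exact hbound

theorem trace_power_rank_perturbation
    {N r p : ℕ} (hp : 2 ≤ p)
    (A C : Matrix (Fin N) (Fin N) ℂ)
    (hA : A.IsHermitian) (hC : C.IsHermitian)
    (hrank : C.rank ≤ r) :
    ‖((A + C) ^ p).trace - (A ^ p).trace - (C ^ p).trace‖ ≤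
      2 ^ p * r *
        (Finset.Icc 1 (p - 1)).sup'
          ⟨1, Finset.mem_Icc.mpr ⟨le_refl 1, by omega⟩⟩
          (fun k => opNorm A ^ k * opNorm C ^ (p - k)) := by
  classical
  have hpos : 0 < p := by omega
  set T : ℕ → ℝ := fun k => opNorm A ^ k * opNorm C ^ (p - k) with hT
  set S : ℝ := (Finset.Icc 1 (p - 1)).sup'
      ⟨1, Finset.mem_Icc.mpr ⟨le_refl 1, by omega⟩⟩ T with hS
  have h1mem : 1 ∈ Finset.Icc 1 (p - 1) := Finset.mem_Icc.mpr ⟨le_refl 1, by omega⟩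
  have hS0 : 0 ≤ S := by
    refine le_trans ?_ (Finset.le_sup' T h1mem)
    exact mul_nonneg (pow_nonneg (opNorm_nonneg A) _) (pow_nonneg (opNorm_nonneg C) _)
  set F : (Fin p → Bool) → ℂ := fun f => (wrd A C f).trace with hF
  set cT : Fin p → Bool := fun _ => true with hcT
  set cF : Fin p → Bool := fun _ => false with hcF
  have hne2 : cF ≠ cT := by
    intro h
    have := congrFun h ⟨0, hpos⟩
    simp [hcT, hcF] at this
  have hwT : wrd A C cT = A ^ p := by
    simp [wrd, hcT, List.ofFn_const, List.prod_replicate]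
  have hwF : wrd A C cF = C ^ p := by
    simp [wrd, hcF, List.ofFn_const, List.prod_replicate]
  set S2 : Finset (Fin p → Bool) := (Finset.univ.erase cT).erase cF with hS2
  have h1 : ((A + C) ^ p).trace = ∑ f : Fin p → Bool, F f := by
    rw [add_pow_expand]
    exact Matrix.trace_sum _ _
  have h2 : ((A + C) ^ p).trace - (A ^ p).trace - (C ^ p).trace = ∑ f ∈ S2, F f := by
    rw [h1, ← Finset.sum_erase_add Finset.univ F (Finset.mem_univ cT),
      ← Finset.sum_erase_add (Finset.univ.erase cT) F
        (Finset.mem_erase.mpr ⟨hne2, Finset.mem_univ cF⟩)]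
    have eT : F cT = (A ^ p).trace := by rw [hF]; simp only; rw [hwT]
    have eF : F cF = (C ^ p).trace := by rw [hF]; simp only; rw [hwF]
    rw [eT, eF, ← hS2]
    ring
  rw [h2]
  have hper : ∀ f ∈ S2, ‖F f‖ ≤ (r : ℝ) * S := by
    intro f hf
    rw [hS2, Finset.mem_erase, Finset.mem_erase] at hf
    have hfF := hf.1
    have hfT := hf.2.1
    obtain ⟨i0, hi0⟩ : ∃ i, f i = false := by
      by_contra h
      push_neg at h
      exact hfT (funext fun i => by
        have := h i
        simp [hcT]
        cases hfi : f i
        · exact absurd hfi (this)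
        · rfl)
    obtain ⟨j0, hj0⟩ : ∃ j, f j = true := by
      by_contra h
      push_neg at h
      exact hfF (funext fun i => by
        cases hfi : f i
        · simp [hcF]
        · exact absurd hfi (h i))
    set k := (Finset.univ.filter (fun i => f i = true)).card with hk
    set k' := (Finset.univ.filter (fun i => ¬ f i = true)).card with hk'
    have hkk' : k + k' = p := by
      rw [hk, hk', Finset.card_filter_add_card_filter_not]
      simp
    have hk1 : 1 ≤ k := by
      rw [hk]
      refine Finset.card_pos.mpr ⟨j0, ?_⟩
      simp [hj0]
    have hk'1 : 1 ≤ k' := by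
      rw [hk']
      refine Finset.card_pos.mpr ⟨i0, ?_⟩
      simp [hi0]
    have hkm : k ∈ Finset.Icc 1 (p - 1) := Finset.mem_Icc.mpr ⟨hk1, by omega⟩
    have hb := word_trace_bound A C hC hrank f i0 hi0
    rw [← hk, ← hk'] at hb
    have hk'eq : k' = p - k := by omega
    refine le_trans hb ?_
    rw [hk'eq]
    exact mul_le_mul_of_nonneg_left (Finset.le_sup' T hkm) (Nat.cast_nonneg r)
  have hcard : (S2.card : ℝ) ≤ 2 ^ p := by
    have h3 : S2.card ≤ Fintype.card (Fin p → Bool) := by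
      refine le_trans (Finset.card_le_card ?_) (Finset.card_univ).le
      intro x hx
      exact Finset.mem_univ x
    rw [Fintype.card_fun] at h3
    simp at h3
    calc (S2.card : ℝ) ≤ ((2 ^ p : ℕ) : ℝ) := by exact_mod_cast h3
      _ = 2 ^ p := by push_cast; ring
  calc ‖∑ f ∈ S2, F f‖ ≤ ∑ f ∈ S2, ‖F f‖ := norm_sum_le _ _
    _ ≤ S2.card • ((r : ℝ) * S) := Finset.sum_le_card_nsmul S2 _ _ hper
    _ = (S2.card : ℝ) * ((r : ℝ) * S) := by rw [nsmul_eq_mul]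
    _ ≤ 2 ^ p * ((r : ℝ) * S) :=
        mul_le_mul_of_nonneg_right hcard (mul_nonneg (Nat.cast_nonneg r) hS0)
    _ = 2 ^ p * r * S := by ring
end

section
/- Let p ≥ 3 be an integer and let Y, H be N×N Hermitian (or real symmetric) matrices. Then |tr((Y+H)^p) - tr(Y^p) - tr(H^p)| ≤ 2^p · max_{1≤k≤p-1} (tr|Y|^{p+1})^{k/(p+1)} · (tr H²)^{(p-k)/2}. -/
open Matrix

namespace TraceBoundAux

variable {N : ℕ}

/-- Squared Frobenius norm. -/
noncomputable def sqF (A : Matrix (Fin N) (Fin N) ℂ) : ℝ := ∑ i, ∑ j, ‖A i j‖ ^ 2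

/-- Squared ℓ² norm of a vector. -/
noncomputable def v2 (x : Fin N → ℂ) : ℝ := ∑ i, ‖x i‖ ^ 2

lemma sqF_nonneg (A : Matrix (Fin N) (Fin N) ℂ) : 0 ≤ sqF A :=
  Finset.sum_nonneg fun _ _ => Finset.sum_nonneg fun _ _ => sq_nonneg _

lemma v2_nonneg (x : Fin N → ℂ) : 0 ≤ v2 x :=
  Finset.sum_nonneg fun _ _ => sq_nonneg _

lemma trace_cs (A B : Matrix (Fin N) (Fin N) ℂ) :
    ‖(A * B).trace‖ ^ 2 ≤ sqF A * sqF B := by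
  have h1 : ‖(A * B).trace‖ ≤ ∑ i, ∑ j, ‖A i j‖ * ‖B j i‖ := by
    calc ‖(A * B).trace‖ ≤ ∑ i, ‖(A * B) i i‖ := by
          rw [Matrix.trace]; exact norm_sum_le _ _
    _ ≤ ∑ i, ∑ j, ‖A i j * B j i‖ := Finset.sum_le_sum fun i _ => by
          rw [Matrix.mul_apply]; exact norm_sum_le _ _
    _ = _ := by simp [norm_mul]
  have h2 : (∑ i, ∑ j, ‖A i j‖ * ‖B j i‖) ^ 2 ≤ sqF A * sqF B := by
    have := Finset.sum_mul_sq_le_sq_mul_sq Finset.univ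
      (fun q : Fin N × Fin N => ‖A q.1 q.2‖) (fun q : Fin N × Fin N => ‖B q.2 q.1‖)
    rw [Fintype.sum_prod_type, Fintype.sum_prod_type, Fintype.sum_prod_type] at this
    calc (∑ i, ∑ j, ‖A i j‖ * ‖B j i‖) ^ 2
        ≤ (∑ i, ∑ j, ‖A i j‖ ^ 2) * ∑ i, ∑ j, ‖B j i‖ ^ 2 := this
    _ = sqF A * sqF B := by rw [sqF, sqF, Finset.sum_comm (f := fun i j => ‖B j i‖ ^ 2)]
  calc ‖(A * B).trace‖ ^ 2 ≤ (∑ i, ∑ j, ‖A i j‖ * ‖B j i‖) ^ 2 :=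
        pow_le_pow_left₀ (norm_nonneg _) h1 2
  _ ≤ sqF A * sqF B := h2

lemma v2_mulVec_le (A : Matrix (Fin N) (Fin N) ℂ) (x : Fin N → ℂ) :
    v2 (A *ᵥ x) ≤ sqF A * v2 x := by
  have key : ∀ i, ‖(A *ᵥ x) i‖ ^ 2 ≤ (∑ j, ‖A i j‖ ^ 2) * v2 x := by
    intro i
    have h1 : ‖(A *ᵥ x) i‖ ≤ ∑ j, ‖A i j‖ * ‖x j‖ := by
      calc ‖(A *ᵥ x) i‖ ≤ ∑ j, ‖A i j * x j‖ := by
            simp only [Matrix.mulVec, dotProduct]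
            exact norm_sum_le _ _
      _ = _ := by simp [norm_mul]
    calc ‖(A *ᵥ x) i‖ ^ 2 ≤ (∑ j, ‖A i j‖ * ‖x j‖) ^ 2 :=
          pow_le_pow_left₀ (norm_nonneg _) h1 2
    _ ≤ _ := Finset.sum_mul_sq_le_sq_mul_sq _ _ _
  calc v2 (A *ᵥ x) ≤ ∑ i, (∑ j, ‖A i j‖ ^ 2) * v2 x := Finset.sum_le_sum fun i _ => key i
  _ = sqF A * v2 x := by rw [sqF, Finset.sum_mul]

lemma sqF_mul_le_of_op {A : Matrix (Fin N) (Fin N) ℂ} {c : ℝ}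
    (h : ∀ x, v2 (A *ᵥ x) ≤ c * v2 x) (M : Matrix (Fin N) (Fin N) ℂ) :
    sqF (A * M) ≤ c * sqF M := by
  have key : ∀ j, ∑ i, ‖(A * M) i j‖ ^ 2 ≤ c * ∑ i, ‖M i j‖ ^ 2 := by
    intro j
    have := h (fun k => M k j)
    simpa [v2, Matrix.mulVec, dotProduct, Matrix.mul_apply] using this
  calc sqF (A * M) = ∑ j, ∑ i, ‖(A * M) i j‖ ^ 2 := Finset.sum_comm
  _ ≤ ∑ j, c * ∑ i, ‖M i j‖ ^ 2 := Finset.sum_le_sum fun j _ => key j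
  _ = c * sqF M := by rw [← Finset.mul_sum, sqF, Finset.sum_comm]

lemma v2_diag_mulVec {d : Fin N → ℂ} {c : ℝ} (hc : 0 ≤ c) (h : ∀ i, ‖d i‖ ≤ c)
    (x : Fin N → ℂ) : v2 ((Matrix.diagonal d) *ᵥ x) ≤ c ^ 2 * v2 x := by
  have : ∀ i, ‖((Matrix.diagonal d) *ᵥ x) i‖ ^ 2 ≤ c ^ 2 * ‖x i‖ ^ 2 := by
    intro i
    rw [Matrix.mulVec_diagonal, norm_mul, mul_pow]
    have : ‖d i‖ ^ 2 ≤ c ^ 2 := pow_le_pow_left₀ (norm_nonneg _) (h i) 2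
    exact mul_le_mul_of_nonneg_right this (sq_nonneg _)
  calc v2 ((Matrix.diagonal d) *ᵥ x) ≤ ∑ i, c ^ 2 * ‖x i‖ ^ 2 :=
        Finset.sum_le_sum fun i _ => this i
  _ = c ^ 2 * v2 x := by rw [← Finset.mul_sum, v2]

lemma sqF_mul_diag {d : Fin N → ℂ} {c : ℝ} (h : ∀ i, ‖d i‖ ≤ c)
    (M : Matrix (Fin N) (Fin N) ℂ) : sqF (M * Matrix.diagonal d) ≤ sqF M * c ^ 2 := by
  have : ∀ i j, ‖(M * Matrix.diagonal d) i j‖ ^ 2 ≤ ‖M i j‖ ^ 2 * c ^ 2 := by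
    intro i j
    rw [Matrix.mul_diagonal, norm_mul, mul_pow]
    exact mul_le_mul_of_nonneg_left
      (pow_le_pow_left₀ (norm_nonneg _) (h j) 2) (sq_nonneg _)
  calc sqF (M * Matrix.diagonal d) ≤ ∑ i, ∑ j, ‖M i j‖ ^ 2 * c ^ 2 :=
        Finset.sum_le_sum fun i _ => Finset.sum_le_sum fun j _ => this i j
  _ = sqF M * c ^ 2 := by rw [sqF, Finset.sum_mul]; simp_rw [Finset.sum_mul]

lemma sqF_diagonal (d : Fin N → ℂ) : sqF (Matrix.diagonal d) = ∑ i, ‖d i‖ ^ 2 := by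
  rw [sqF]
  refine Finset.sum_congr rfl fun i _ => ?_
  rw [Finset.sum_eq_single i]
  · rw [Matrix.diagonal_apply_eq]
  · intro j _ hj
    rw [Matrix.diagonal_apply_ne' _ hj]; simp
  · simp


/-- Product of the word given by a boolean list: `true ↦ D`, `false ↦ K`. -/
noncomputable def P (D K : Matrix (Fin N) (Fin N) ℂ) (l : List Bool) :
    Matrix (Fin N) (Fin N) ℂ :=
  (l.map fun t => if t then D else K).prod

variable (D K : Matrix (Fin N) (Fin N) ℂ)

@[simp] lemma P_nil : P D K [] = 1 := rfl

lemma P_cons (x : Bool) (t : List Bool) :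
    P D K (x :: t) = (if x then D else K) * P D K t := by
  simp [P]

lemma P_append (s t : List Bool) : P D K (s ++ t) = P D K s * P D K t := by
  simp [P]

lemma P_all_true {l : List Bool} (h : ∀ x ∈ l, x = true) :
    P D K l = D ^ l.length := by
  rw [List.eq_replicate_of_mem h]
  simp [P, List.map_replicate, List.prod_replicate]

lemma count_true_add_count_false : ∀ l : List Bool,
    l.count true + l.count false = l.length := by
  intro l
  induction l with
  | nil => simp
  | cons x t ih => cases x <;> simp [List.count_cons] <;> omega

lemma expand : ∀ n : ℕ, (D + K) ^ n = ∑ f : Fin n → Bool, P D K (List.ofFn f) := by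
  intro n
  induction n with
  | zero => simp
  | succ n ih =>
    rw [pow_succ', ih, Finset.mul_sum]
    rw [← ((Fin.consEquiv fun _ : Fin (n + 1) => Bool).sum_comp (fun g => P D K (List.ofFn g)))]
    rw [Fintype.sum_prod_type]
    have hterm : ∀ (b : Bool) (f : Fin n → Bool),
        P D K (List.ofFn ((Fin.consEquiv fun _ : Fin (n + 1) => Bool) (b, f)))
          = (if b then D else K) * P D K (List.ofFn f) := by
      intro b f
      rw [List.ofFn_succ, ← P_cons]
      congr 1 <;> simp [Fin.consEquiv]
    simp_rw [hterm]
    rw [Fintype.sum_bool]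
    simp only [if_true, if_false, ← Finset.sum_add_distrib, ← add_mul]
    rfl

variable {a b : ℝ}

lemma peel_right (hDright : ∀ M, sqF (M * D) ≤ sqF M * a ^ 2)
    (ha : 0 ≤ a) :
    ∀ (j : ℕ) (M : Matrix (Fin N) (Fin N) ℂ), sqF (M * D ^ j) ≤ sqF M * a ^ (2 * j) := by
  intro j
  induction j with
  | zero => intro M; simp
  | succ j ih =>
    intro M
    have hrw : M * D ^ (j + 1) = M * D ^ j * D := by rw [pow_succ, mul_assoc]
    rw [hrw]
    calc sqF (M * D ^ j * D) ≤ sqF (M * D ^ j) * a ^ 2 := hDright _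
    _ ≤ sqF M * a ^ (2 * j) * a ^ 2 :=
        mul_le_mul_of_nonneg_right (ih M) (sq_nonneg a)
    _ = sqF M * a ^ (2 * (j + 1)) := by
        rw [mul_assoc, ← pow_add, show 2 * j + 2 = 2 * (j + 1) by omega]

lemma sqF_word (ha : 0 ≤ a) (hb : 0 ≤ b)
    (hDop : ∀ x, v2 (D *ᵥ x) ≤ a ^ 2 * v2 x)
    (hDright : ∀ M, sqF (M * D) ≤ sqF M * a ^ 2)
    (hK : sqF K = b ^ 2) :
    ∀ u : List Bool, 1 ≤ u.count false →
      sqF (P D K u) ≤ a ^ (2 * u.count true) * b ^ (2 * u.count false) := by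
  intro u
  induction u with
  | nil => simp
  | cons x t ih =>
    intro hcf
    cases x with
    | true =>
      have hcf' : 1 ≤ t.count false := by simpa [List.count_cons] using hcf
      have h1 : sqF (P D K (true :: t)) ≤ a ^ 2 * sqF (P D K t) := by
        rw [P_cons]
        simpa using sqF_mul_le_of_op hDop (P D K t)
      calc sqF (P D K (true :: t)) ≤ a ^ 2 * sqF (P D K t) := h1
      _ ≤ a ^ 2 * (a ^ (2 * t.count true) * b ^ (2 * t.count false)) :=
          mul_le_mul_of_nonneg_left (ih hcf') (sq_nonneg a)
      _ = a ^ (2 * (true :: t).count true) * b ^ (2 * (true :: t).count false) := by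
          have h2 : (true :: t).count true = t.count true + 1 := by simp
          have h3 : (true :: t).count false = t.count false := by simp
          rw [h2, h3, ← mul_assoc, ← pow_add,
            show 2 + 2 * t.count true = 2 * (t.count true + 1) by omega]
    | false =>
      rcases Nat.eq_zero_or_pos (t.count false) with h0 | hpos
      · -- tail is all true
        have hall : ∀ x ∈ t, x = true := by
          intro x hx
          cases x
          · exfalso
            have : 0 < t.count false := List.count_pos_iff.mpr hx
            omega
          · rfl
        have hPt : P D K t = D ^ t.length := P_all_true D K hall
        have hct : t.count true = t.length := by
          have := count_true_add_count_false t
          omega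
        have h1 : sqF (P D K (false :: t)) ≤ sqF K * a ^ (2 * t.length) := by
          rw [P_cons, hPt]
          simpa using peel_right D hDright ha t.length K
        calc sqF (P D K (false :: t)) ≤ sqF K * a ^ (2 * t.length) := h1
        _ = a ^ (2 * (false :: t).count true) * b ^ (2 * (false :: t).count false) := by
            rw [hK]
            simp [List.count_cons, h0, hct]
            ring
      · have hKop : ∀ x, v2 (K *ᵥ x) ≤ b ^ 2 * v2 x := by
          intro x
          have := v2_mulVec_le K x
          rwa [hK] at this
        have h1 : sqF (P D K (false :: t)) ≤ b ^ 2 * sqF (P D K t) := by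
          rw [P_cons]
          simpa using sqF_mul_le_of_op hKop (P D K t)
        calc sqF (P D K (false :: t)) ≤ b ^ 2 * sqF (P D K t) := h1
        _ ≤ b ^ 2 * (a ^ (2 * t.count true) * b ^ (2 * t.count false)) :=
            mul_le_mul_of_nonneg_left (ih hpos) (sq_nonneg b)
        _ = a ^ (2 * (false :: t).count true) * b ^ (2 * (false :: t).count false) := by
            have h2 : (false :: t).count true = t.count true := by simp
            have h3 : (false :: t).count false = t.count false + 1 := by simp
            rw [h2, h3, mul_comm (b ^ 2), mul_assoc, ← pow_add,
              show 2 * t.count false + 2 = 2 * (t.count false + 1) by omega]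

lemma word_trace_bound {p : ℕ} (hp : 3 ≤ p) (ha : 0 ≤ a) (hb : 0 ≤ b)
    (hDop : ∀ x, v2 (D *ᵥ x) ≤ a ^ 2 * v2 x)
    (hDright : ∀ M, sqF (M * D) ≤ sqF M * a ^ 2)
    (hK : sqF K = b ^ 2)
    (hDpow : sqF (D ^ (p - 1)) ≤ a ^ (2 * (p - 1)))
    (l : List Bool) (hl : l.length = p)
    (h1 : 1 ≤ l.count true) (h2 : 1 ≤ l.count false) :
    ‖(P D K l).trace‖ ≤ a ^ l.count true * b ^ l.count false := by
  have hmem : false ∈ l := List.count_pos_iff.mp h2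
  obtain ⟨t₁, t₂, rfl⟩ := List.append_of_mem hmem
  set u := t₂ ++ t₁ with hu
  have htr : (P D K (t₁ ++ false :: t₂)).trace = (K * P D K u).trace := by
    rw [P_append, P_cons, if_neg (by simp), Matrix.trace_mul_comm, mul_assoc, ← P_append]
  have hctu : u.count true = (t₁ ++ false :: t₂).count true := by
    simp [hu, List.count_append, List.count_cons]
    omega
  have hcfu : u.count false + 1 = (t₁ ++ false :: t₂).count false := by
    simp [hu, List.count_append, List.count_cons]
    omega
  have hlen : u.length + 1 = p := by
    rw [← hl]
    simp [hu, List.length_append]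
    omega
  have hsq : sqF (P D K u) ≤ a ^ (2 * u.count true) * b ^ (2 * u.count false) := by
    rcases Nat.eq_zero_or_pos (u.count false) with h0 | hpos
    · have hall : ∀ x ∈ u, x = true := by
        intro x hx
        cases x
        · exact absurd (List.count_pos_iff.mpr hx) (by omega)
        · rfl
      have hctl : u.count true = u.length := by
        have := count_true_add_count_false u
        omega
      have hPu : P D K u = D ^ (p - 1) := by
        rw [P_all_true D K hall, show u.length = p - 1 by omega]
      rw [hPu, hctl, h0, show u.length = p - 1 by omega]
      simpa using hDpow
    · exact sqF_word D K ha hb hDop hDright hK u hpos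
  have hcs : ‖(K * P D K u).trace‖ ^ 2 ≤ sqF K * sqF (P D K u) := trace_cs _ _
  have key : ‖(P D K (t₁ ++ false :: t₂)).trace‖ ^ 2
      ≤ (a ^ (t₁ ++ false :: t₂).count true * b ^ (t₁ ++ false :: t₂).count false) ^ 2 := by
    rw [htr]
    calc ‖(K * P D K u).trace‖ ^ 2 ≤ sqF K * sqF (P D K u) := hcs
    _ ≤ b ^ 2 * (a ^ (2 * u.count true) * b ^ (2 * u.count false)) := by
        rw [hK]
        exact mul_le_mul_of_nonneg_left hsq (sq_nonneg b)
    _ = (a ^ (t₁ ++ false :: t₂).count true * b ^ (t₁ ++ false :: t₂).count false) ^ 2 := by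
        rw [← hctu, ← hcfu, mul_pow, ← pow_mul, ← pow_mul, mul_comm (b ^ 2),
          mul_assoc, ← pow_add,
          show 2 * u.count false + 2 = (u.count false + 1) * 2 by omega,
          show 2 * u.count true = u.count true * 2 by omega]
  have hrhs : 0 ≤ a ^ (t₁ ++ false :: t₂).count true * b ^ (t₁ ++ false :: t₂).count false :=
    mul_nonneg (pow_nonneg ha _) (pow_nonneg hb _)
  exact le_of_pow_le_pow_left₀ (by norm_num) hrhs key

lemma core {p : ℕ} (hp : 3 ≤ p)
    (ha : 0 ≤ a) (hb : 0 ≤ b)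
    (hDop : ∀ x, v2 (D *ᵥ x) ≤ a ^ 2 * v2 x)
    (hDright : ∀ M, sqF (M * D) ≤ sqF M * a ^ 2)
    (hK : sqF K = b ^ 2)
    (hDpow : sqF (D ^ (p - 1)) ≤ a ^ (2 * (p - 1)))
    {B : ℝ} (hB : ∀ k : ℕ, 1 ≤ k → k ≤ p - 1 → a ^ k * b ^ (p - k) ≤ B) :
    ‖((D + K) ^ p).trace - (D ^ p).trace - (K ^ p).trace‖ ≤ 2 ^ p * B := by
  classical
  have hpos : 0 < p := by omega
  set ct : Fin p → Bool := fun _ => true with hct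
  set cf : Fin p → Bool := fun _ => false with hcf
  have hne : ct ≠ cf := by
    intro h
    have := congrFun h ⟨0, hpos⟩
    simp [hct, hcf] at this
  have hQct : P D K (List.ofFn ct) = D ^ p := by
    rw [hct]
    rw [List.ofFn_const]
    simp [P, List.map_replicate, List.prod_replicate]
  have hQcf : P D K (List.ofFn cf) = K ^ p := by
    rw [hcf]
    rw [List.ofFn_const]
    simp [P, List.map_replicate, List.prod_replicate]
  have hsplit : ((D + K) ^ p).trace - (D ^ p).trace - (K ^ p).trace
      = ∑ f ∈ Finset.univ \ {ct, cf}, (P D K (List.ofFn f)).trace := by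
    have e1 : ((D + K) ^ p).trace = ∑ f : Fin p → Bool, (P D K (List.ofFn f)).trace := by
      rw [expand D K p, Matrix.trace_sum]
    have e2 : ∑ f ∈ Finset.univ \ {ct, cf}, (P D K (List.ofFn f)).trace
        + ∑ f ∈ ({ct, cf} : Finset (Fin p → Bool)), (P D K (List.ofFn f)).trace
        = ∑ f : Fin p → Bool, (P D K (List.ofFn f)).trace :=
      Finset.sum_sdiff (Finset.subset_univ _)
    have e3 : ∑ f ∈ ({ct, cf} : Finset (Fin p → Bool)), (P D K (List.ofFn f)).trace
        = (D ^ p).trace + (K ^ p).trace := by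
      rw [Finset.sum_pair hne, hQct, hQcf]
    rw [e1, ← e2, e3]
    ring
  rw [hsplit]
  have hBnn : 0 ≤ B :=
    le_trans (mul_nonneg (pow_nonneg ha 1) (pow_nonneg hb (p - 1))) (hB 1 le_rfl (by omega))
  have hbound : ∀ f ∈ Finset.univ \ ({ct, cf} : Finset (Fin p → Bool)),
      ‖(P D K (List.ofFn f)).trace‖ ≤ B := by
    intro f hf
    simp only [Finset.mem_sdiff, Finset.mem_insert, Finset.mem_singleton] at hf
    obtain ⟨-, hf2⟩ := hf
    push_neg at hf2
    obtain ⟨hft, hff⟩ := hf2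
    set l := List.ofFn f with hldef
    have hl : l.length = p := by simp [hldef]
    have hsum := count_true_add_count_false l
    have h1 : 1 ≤ l.count true := by
      rw [Nat.one_le_iff_ne_zero]
      intro h0
      apply hff
      funext i
      have : f i ∈ l := by
        rw [hldef, List.mem_ofFn]
        exact ⟨i, rfl⟩
      cases hfi : f i
      · rfl
      · exfalso
        have h3 : true ∈ l := hfi ▸ this
        have := List.count_pos_iff.mpr h3
        omega
    have h2 : 1 ≤ l.count false := by
      rw [Nat.one_le_iff_ne_zero]
      intro h0
      apply hft
      funext i
      have : f i ∈ l := by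
        rw [hldef, List.mem_ofFn]
        exact ⟨i, rfl⟩
      cases hfi : f i
      · exfalso
        have h3 : false ∈ l := hfi ▸ this
        have := List.count_pos_iff.mpr h3
        omega
      · rfl
    have hwb := word_trace_bound D K hp ha hb hDop hDright hK hDpow l hl h1 h2
    refine le_trans hwb ?_
    have : l.count false = p - l.count true := by omega
    rw [this]
    exact hB (l.count true) h1 (by omega)
  calc ‖∑ f ∈ Finset.univ \ ({ct, cf} : Finset (Fin p → Bool)), (P D K (List.ofFn f)).trace‖
      ≤ ∑ f ∈ Finset.univ \ ({ct, cf} : Finset (Fin p → Bool)), ‖(P D K (List.ofFn f)).trace‖ :=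
        norm_sum_le _ _
  _ ≤ ∑ f ∈ Finset.univ \ ({ct, cf} : Finset (Fin p → Bool)), B :=
        Finset.sum_le_sum hbound
  _ = (Finset.univ \ ({ct, cf} : Finset (Fin p → Bool))).card * B := by
        rw [Finset.sum_const, nsmul_eq_mul]
  _ ≤ 2 ^ p * B := by
        refine mul_le_mul_of_nonneg_right ?_ hBnn
        have : ((Finset.univ \ ({ct, cf} : Finset (Fin p → Bool))).card : ℝ)
            ≤ (Finset.univ : Finset (Fin p → Bool)).card := by
          exact_mod_cast Finset.card_le_card (Finset.sdiff_subset)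
        refine le_trans this ?_
        rw [Finset.card_univ]
        simp [Fintype.card_fun]

lemma conj_pow (U M : Matrix (Fin N) (Fin N) ℂ) (hU : U * star U = 1) (hU' : star U * U = 1)
    (n : ℕ) : (star U * M * U) ^ n = star U * M ^ n * U := by
  induction n with
  | zero => rw [pow_zero, pow_zero, mul_one, hU']
  | succ n ih =>
    rw [pow_succ, ih, pow_succ]
    calc star U * M ^ n * U * (star U * M * U)
        = star U * M ^ n * (U * star U) * M * U := by simp only [mul_assoc]
      _ = star U * (M ^ n * M) * U := by rw [hU, mul_one]; simp only [mul_assoc]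

lemma trace_conj (U : Matrix (Fin N) (Fin N) ℂ) (hU : U * star U = 1)
    (M : Matrix (Fin N) (Fin N) ℂ) : (star U * M * U).trace = M.trace := by
  rw [Matrix.trace_mul_comm, ← mul_assoc, hU, one_mul]

end TraceBoundAux

open TraceBoundAux in
/-- For Hermitian `Y`, `tr |Y|^q = ∑ i, |λ_i(Y)|^q` where the `λ_i` are the eigenvalues;
we state the bound in terms of the eigenvalues. -/
theorem trace_power_add_sub_bound
    {N p : ℕ} (hp : 3 ≤ p)
    (Y H : Matrix (Fin N) (Fin N) ℂ)
    (hY : Y.IsHermitian) (hH : H.IsHermitian) :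
    ‖((Y + H) ^ p).trace - (Y ^ p).trace - (H ^ p).trace‖ ≤
      2 ^ p *
        (Finset.Icc 1 (p - 1)).sup'
          ⟨1, Finset.mem_Icc.mpr ⟨le_refl 1, by omega⟩⟩
          (fun k =>
            (∑ i, |hY.eigenvalues i| ^ (p + 1)) ^ ((k : ℝ) / (p + 1)) *
            (∑ i, (hH.eigenvalues i) ^ 2) ^ (((p : ℝ) - k) / 2)) := by
  classical
  set U : Matrix (Fin N) (Fin N) ℂ := (hY.eigenvectorUnitary : Matrix (Fin N) (Fin N) ℂ)
    with hUdef
  have hU : U * star U = 1 := Matrix.mem_unitaryGroup_iff.mp (hY.eigenvectorUnitary).2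
  have hU' : star U * U = 1 := Matrix.mem_unitaryGroup_iff'.mp (hY.eigenvectorUnitary).2
  set D : Matrix (Fin N) (Fin N) ℂ :=
    Matrix.diagonal (RCLike.ofReal ∘ hY.eigenvalues) with hDdef
  set K : Matrix (Fin N) (Fin N) ℂ := star U * H * U with hKdef
  have hYD : star U * Y * U = D := by
    rw [hDdef, ← hY.conjStarAlgAut_star_eigenvectorUnitary, Unitary.conjStarAlgAut_apply,
      Unitary.coe_star, star_star]
  have hDK : star U * (Y + H) * U = D + K := by rw [mul_add, add_mul, hYD]
  -- traces transfer
  have e1 : ((Y + H) ^ p).trace = ((D + K) ^ p).trace := by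
    rw [← hDK, conj_pow U (Y + H) hU hU', trace_conj U hU]
  have e2 : (Y ^ p).trace = (D ^ p).trace := by
    rw [← hYD, conj_pow U Y hU hU', trace_conj U hU]
  have e3 : (H ^ p).trace = (K ^ p).trace := by
    rw [hKdef, conj_pow U H hU hU', trace_conj U hU]
  rw [e1, e2, e3]
  -- scalars
  set S : ℝ := ∑ i, |hY.eigenvalues i| ^ (p + 1) with hSdef
  set T : ℝ := ∑ i, (hH.eigenvalues i) ^ 2 with hTdef
  have hS : 0 ≤ S := Finset.sum_nonneg fun i _ => pow_nonneg (abs_nonneg _) _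
  have hT : 0 ≤ T := Finset.sum_nonneg fun i _ => sq_nonneg _
  set a : ℝ := S ^ (((p + 1 : ℕ) : ℝ))⁻¹ with hadef
  set b : ℝ := T ^ (((2 : ℕ) : ℝ))⁻¹ with hbdef
  have ha : 0 ≤ a := Real.rpow_nonneg hS _
  have hb : 0 ≤ b := Real.rpow_nonneg hT _
  have haS : a ^ (p + 1) = S := Real.rpow_inv_natCast_pow hS (by omega)
  have hb2 : b ^ 2 = T := Real.rpow_inv_natCast_pow hT (by norm_num)
  have hlama : ∀ i, |hY.eigenvalues i| ≤ a := by
    intro i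
    have h1 : |hY.eigenvalues i| ^ (p + 1) ≤ S := by
      rw [hSdef]
      exact Finset.single_le_sum (f := fun i => |hY.eigenvalues i| ^ (p + 1))
        (fun j _ => pow_nonneg (abs_nonneg _) _) (Finset.mem_univ i)
    calc |hY.eigenvalues i|
        = (|hY.eigenvalues i| ^ (p + 1)) ^ (((p + 1 : ℕ) : ℝ))⁻¹ :=
          (Real.pow_rpow_inv_natCast (abs_nonneg _) (by omega)).symm
      _ ≤ a := Real.rpow_le_rpow (pow_nonneg (abs_nonneg _) _) h1 (by positivity)
  have hnorm : ∀ i, ‖(RCLike.ofReal ∘ hY.eigenvalues : Fin N → ℂ) i‖ ≤ a := by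
    intro i
    simpa [RCLike.norm_ofReal] using hlama i
  have hDop : ∀ x, v2 (D *ᵥ x) ≤ a ^ 2 * v2 x := fun x =>
    v2_diag_mulVec ha hnorm x
  have hDright : ∀ M, sqF (M * D) ≤ sqF M * a ^ 2 := fun M =>
    sqF_mul_diag hnorm M
  -- sqF K = b ^ 2
  have hKherm : Kᴴ = K := by
    simp only [hKdef, Matrix.star_eq_conjTranspose, Matrix.conjTranspose_mul,
      Matrix.conjTranspose_conjTranspose, hH.eq, mul_assoc]
  have hKK : (K * K).trace = ((Matrix.diagonal (RCLike.ofReal ∘ hH.eigenvalues)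
      * Matrix.diagonal (RCLike.ofReal ∘ hH.eigenvalues)) : Matrix (Fin N) (Fin N) ℂ).trace := by
    set V : Matrix (Fin N) (Fin N) ℂ := (hH.eigenvectorUnitary : Matrix (Fin N) (Fin N) ℂ)
    have hV : V * star V = 1 := Matrix.mem_unitaryGroup_iff.mp (hH.eigenvectorUnitary).2
    have hV' : star V * V = 1 := Matrix.mem_unitaryGroup_iff'.mp (hH.eigenvectorUnitary).2
    have hHE : star V * H * V = Matrix.diagonal (RCLike.ofReal ∘ hH.eigenvalues) :=
      by
        rw [← hH.conjStarAlgAut_star_eigenvectorUnitary, Unitary.conjStarAlgAut_apply,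
          Unitary.coe_star, star_star]
    have c1 : (K * K).trace = (H * H).trace := by
      rw [← pow_two, hKdef, conj_pow U H hU hU', trace_conj U hU, pow_two]
    have c2 : (H * H).trace = ((star V * H * V) * (star V * H * V)).trace := by
      rw [← pow_two, ← pow_two, conj_pow V H hV hV', trace_conj V hV]
    rw [c1, c2, hHE]
  have hsqFK : sqF K = T := by
    have step1 : ((sqF K : ℝ) : ℂ) = (K * K).trace := by
      conv_rhs => rw [show K * K = Kᴴ * K by rw [hKherm]]
      rw [Matrix.trace]
      simp only [Matrix.diag_apply, Matrix.mul_apply, Matrix.conjTranspose_apply]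
      have hcm : ∀ j i : Fin N, star (K i j) * K i j = ((‖K i j‖ : ℂ)) ^ 2 := by
        intro j i
        exact RCLike.conj_mul (K i j)
      simp_rw [hcm]
      rw [sqF]
      push_cast
      exact_mod_cast Finset.sum_comm
    have step2 : (K * K).trace = ((T : ℝ) : ℂ) := by
      rw [hKK, Matrix.diagonal_mul_diagonal, Matrix.trace_diagonal, hTdef]
      push_cast
      simp [Pi.mul_apply, Function.comp, pow_two]
    have := step1.trans step2
    exact_mod_cast this
  have hKb : sqF K = b ^ 2 := by rw [hsqFK, hb2]
  -- sqF (D ^ (p - 1)) bound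
  have hDpow : sqF (D ^ (p - 1)) ≤ a ^ (2 * (p - 1)) := by
    rw [hDdef, Matrix.diagonal_pow, sqF_diagonal]
    have hterm : ∀ i, ‖((RCLike.ofReal ∘ hY.eigenvalues : Fin N → ℂ) ^ (p - 1)) i‖ ^ 2
        ≤ a ^ (p - 3) * |hY.eigenvalues i| ^ (p + 1) := by
      intro i
      have h1 : ‖((RCLike.ofReal ∘ hY.eigenvalues : Fin N → ℂ) ^ (p - 1)) i‖ ^ 2
          = |hY.eigenvalues i| ^ ((p - 1) * 2) := by
        simp only [Pi.pow_apply, norm_pow, Function.comp_apply, RCLike.norm_ofReal]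
        rw [← pow_mul]
      rw [h1, show (p - 1) * 2 = (p - 3) + (p + 1) by omega, pow_add]
      exact mul_le_mul_of_nonneg_right
        (pow_le_pow_left₀ (abs_nonneg _) (hlama i) _)
        (pow_nonneg (abs_nonneg _) _)
    calc (∑ i, ‖((RCLike.ofReal ∘ hY.eigenvalues : Fin N → ℂ) ^ (p - 1)) i‖ ^ 2)
        ≤ ∑ i, a ^ (p - 3) * |hY.eigenvalues i| ^ (p + 1) :=
          Finset.sum_le_sum fun i _ => hterm i
      _ = a ^ (p - 3) * S := by rw [← Finset.mul_sum, hSdef]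
      _ = a ^ (2 * (p - 1)) := by
          rw [← haS, ← pow_add, show p - 3 + (p + 1) = 2 * (p - 1) by omega]
  -- the sup' bound
  have hB : ∀ k : ℕ, 1 ≤ k → k ≤ p - 1 →
      a ^ k * b ^ (p - k) ≤
      (Finset.Icc 1 (p - 1)).sup'
        ⟨1, Finset.mem_Icc.mpr ⟨le_refl 1, by omega⟩⟩
        (fun k =>
          S ^ ((k : ℝ) / (p + 1)) * T ^ (((p : ℝ) - k) / 2)) := by
    intro k hk1 hk2
    have hkp : k ≤ p := by omega
    have hak : a ^ k = S ^ ((k : ℝ) / (p + 1)) := by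
      rw [hadef, ← Real.rpow_natCast (S ^ (((p + 1 : ℕ) : ℝ))⁻¹) k, ← Real.rpow_mul hS,
        show (((p + 1 : ℕ) : ℝ))⁻¹ * (k : ℕ) = (k : ℝ) / ((p : ℝ) + 1) by push_cast; ring]
    have hbk : b ^ (p - k) = T ^ (((p : ℝ) - k) / 2) := by
      rw [hbdef, ← Real.rpow_natCast (T ^ (((2 : ℕ) : ℝ))⁻¹) (p - k), ← Real.rpow_mul hT,
        show (((2 : ℕ) : ℝ))⁻¹ * ((p - k : ℕ) : ℝ) = ((p : ℝ) - k) / 2 by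
          rw [Nat.cast_sub hkp]; push_cast; ring]
    rw [hak, hbk]
    exact Finset.le_sup' (f := fun k : ℕ =>
      S ^ ((k : ℝ) / (p + 1)) * T ^ (((p : ℝ) - k) / 2))
      (Finset.mem_Icc.mpr ⟨hk1, hk2⟩)
  exact core D K hp ha hb hDop hDright hKb hDpow hB
end

section
/- Let p ≥ 3, s ∈ {1,...,p}, and n₁,...,n_s, m₁,...,m_s positive integers with Σnᵢ + Σmⱼ = p and k = Σnᵢ ≤ p-1 (so Σmⱼ ≥ 1). Then for all N×N Hermitian matrices Y, H: |tr(Y^{n₁}H^{m₁}···Y^{n_s}H^{m_s})| ≤ (tr|Y|^{p+1})^{k/(p+1)} · (tr H²)^{(p-k)/2}. -/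
open Matrix

variable {N : ℕ}

/-- squared Frobenius norm -/
noncomputable def gsq (M : Matrix (Fin N) (Fin N) ℂ) : ℝ := ∑ i, ∑ j, ‖M i j‖ ^ 2

lemma gsq_nonneg (M : Matrix (Fin N) (Fin N) ℂ) : 0 ≤ gsq M := by
  apply Finset.sum_nonneg; intro i _; apply Finset.sum_nonneg; intro j _; positivity

lemma gsq_eq_trace (M : Matrix (Fin N) (Fin N) ℂ) :
    ((gsq M : ℝ) : ℂ) = (Mᴴ * M).trace := by
  rw [Matrix.trace]
  push_cast [gsq]
  rw [Finset.sum_comm]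
  refine Finset.sum_congr rfl fun j _ => ?_
  rw [Matrix.diag_apply, Matrix.mul_apply]
  refine Finset.sum_congr rfl fun i _ => ?_
  rw [Matrix.conjTranspose_apply]
  rw [Complex.star_def, ← Complex.normSq_eq_conj_mul_self, Complex.normSq_eq_norm_sq]
  norm_num

lemma gsq_unitary_left {U : Matrix (Fin N) (Fin N) ℂ} (hU : star U * U = 1)
    (M : Matrix (Fin N) (Fin N) ℂ) : gsq (U * M) = gsq M := by
  have : ((gsq (U * M) : ℝ) : ℂ) = ((gsq M : ℝ) : ℂ) := by
    rw [gsq_eq_trace, gsq_eq_trace, Matrix.conjTranspose_mul, Matrix.mul_assoc,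
      ← Matrix.mul_assoc Uᴴ U M, show Uᴴ * U = 1 from hU, Matrix.one_mul]
  exact_mod_cast this

lemma gsq_unitary_right {U : Matrix (Fin N) (Fin N) ℂ} (hU : U * star U = 1)
    (M : Matrix (Fin N) (Fin N) ℂ) : gsq (M * U) = gsq M := by
  have : ((gsq (M * U) : ℝ) : ℂ) = ((gsq M : ℝ) : ℂ) := by
    rw [gsq_eq_trace, gsq_eq_trace, Matrix.conjTranspose_mul]
    rw [Matrix.mul_assoc, Matrix.trace_mul_comm, Matrix.mul_assoc, Matrix.mul_assoc,
      show U * Uᴴ = 1 from hU, Matrix.mul_one, Matrix.trace_mul_comm]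
  exact_mod_cast this

lemma gsq_diag_left {d : Fin N → ℂ} {c : ℝ} (hc : 0 ≤ c) (hd : ∀ i, ‖d i‖ ≤ c)
    (M : Matrix (Fin N) (Fin N) ℂ) : gsq (Matrix.diagonal d * M) ≤ c ^ 2 * gsq M := by
  rw [gsq, gsq, Finset.mul_sum]
  refine Finset.sum_le_sum fun i _ => ?_
  rw [Finset.mul_sum]
  refine Finset.sum_le_sum fun j _ => ?_
  rw [Matrix.diagonal_mul, norm_mul, mul_pow]
  exact mul_le_mul_of_nonneg_right (pow_le_pow_left₀ (norm_nonneg _) (hd i) 2) (by positivity)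

lemma gsq_diag_right {d : Fin N → ℂ} {c : ℝ} (hc : 0 ≤ c) (hd : ∀ i, ‖d i‖ ≤ c)
    (M : Matrix (Fin N) (Fin N) ℂ) : gsq (M * Matrix.diagonal d) ≤ c ^ 2 * gsq M := by
  rw [gsq, gsq, Finset.mul_sum]
  refine Finset.sum_le_sum fun i _ => ?_
  rw [Finset.mul_sum]
  refine Finset.sum_le_sum fun j _ => ?_
  rw [Matrix.mul_diagonal, norm_mul, mul_pow, mul_comm]
  exact mul_le_mul_of_nonneg_right (pow_le_pow_left₀ (norm_nonneg _) (hd j) 2) (by positivity)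

lemma gsq_diagonal (d : Fin N → ℂ) : gsq (Matrix.diagonal d) = ∑ i, ‖d i‖ ^ 2 := by
  rw [gsq]
  refine Finset.sum_congr rfl fun i _ => ?_
  rw [Finset.sum_eq_single i]
  · rw [Matrix.diagonal_apply_eq]
  · intro j _ hj
    rw [Matrix.diagonal_apply_ne d (Ne.symm hj)]
    simp
  · simp

lemma trace_CS (A B : Matrix (Fin N) (Fin N) ℂ) :
    ‖(A * B).trace‖ ≤ Real.sqrt (gsq A) * Real.sqrt (gsq B) := by
  have h1 : (A * B).trace = ∑ i, ∑ j, A i j * B j i := by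
    rw [Matrix.trace]
    exact Finset.sum_congr rfl fun i _ => Matrix.mul_apply
  rw [h1]
  calc ‖∑ i, ∑ j, A i j * B j i‖ ≤ ∑ i, ∑ j, ‖A i j‖ * ‖B j i‖ := by
        refine (norm_sum_le _ _).trans (Finset.sum_le_sum fun i _ => ?_)
        refine (norm_sum_le _ _).trans (Finset.sum_le_sum fun j _ => ?_)
        rw [norm_mul]
    _ = ∑ x : Fin N × Fin N, ‖A x.1 x.2‖ * ‖B x.2 x.1‖ := by
        rw [← Finset.sum_product']
        rfl
    _ ≤ Real.sqrt (∑ x : Fin N × Fin N, ‖A x.1 x.2‖ ^ 2) *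
        Real.sqrt (∑ x : Fin N × Fin N, ‖B x.2 x.1‖ ^ 2) :=
        Real.sum_mul_le_sqrt_mul_sqrt _ _ _
    _ = Real.sqrt (gsq A) * Real.sqrt (gsq B) := by
        congr 1
        · congr 1
          rw [gsq, ← Finset.sum_product']
          rfl
        · congr 1
          rw [gsq, Finset.sum_comm, ← Finset.sum_product']
          rfl

/-- `A` acts with norm ≤ `c` on both sides w.r.t. the Frobenius norm. -/
def good (A : Matrix (Fin N) (Fin N) ℂ) (c : ℝ) : Prop :=
  0 ≤ c ∧ (∀ M, gsq (A * M) ≤ c ^ 2 * gsq M) ∧ (∀ M, gsq (M * A) ≤ c ^ 2 * gsq M)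

lemma good_of_spectral {U : Matrix (Fin N) (Fin N) ℂ} {d : Fin N → ℂ} {c : ℝ}
    (hU1 : star U * U = 1) (hU2 : U * star U = 1) (hc : 0 ≤ c) (hd : ∀ i, ‖d i‖ ≤ c) :
    good (U * Matrix.diagonal d * star U) c := by
  refine ⟨hc, fun M => ?_, fun M => ?_⟩
  · have h1 : U * Matrix.diagonal d * star U * M
        = U * (Matrix.diagonal d * (star U * M)) := by
      simp only [Matrix.mul_assoc]
    rw [h1, gsq_unitary_left hU1]
    calc gsq (Matrix.diagonal d * (star U * M)) ≤ c ^ 2 * gsq (star U * M) :=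
          gsq_diag_left hc hd _
      _ = c ^ 2 * gsq M := by
          rw [gsq_unitary_left (by rwa [star_star])]
  · have h1 : M * (U * Matrix.diagonal d * star U)
        = ((M * U) * Matrix.diagonal d) * star U := by
      simp only [Matrix.mul_assoc]
    rw [h1, gsq_unitary_right (by rwa [star_star])]
    calc gsq (M * U * Matrix.diagonal d) ≤ c ^ 2 * gsq (M * U) := gsq_diag_right hc hd _
      _ = c ^ 2 * gsq M := by rw [gsq_unitary_right hU2]

section lists

variable (w : Bool → Matrix (Fin N) (Fin N) ℂ) (c : Bool → ℝ)

lemma weight_nonneg (hc : ∀ x, 0 ≤ c x) (L : List Bool) : 0 ≤ (L.map c).prod := by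
  induction L with
  | nil => simp
  | cons x T ih => rw [List.map_cons, List.prod_cons]; exact mul_nonneg (hc x) ih

lemma gsq_list_left (hgood : ∀ x, good (w x) (c x)) (L : List Bool) :
    ∀ M, gsq ((L.map w).prod * M) ≤ ((L.map c).prod) ^ 2 * gsq M := by
  induction L with
  | nil => intro M; simp
  | cons x T ih =>
    intro M
    rw [List.map_cons, List.prod_cons, List.map_cons, List.prod_cons, Matrix.mul_assoc]
    calc gsq (w x * ((T.map w).prod * M)) ≤ (c x) ^ 2 * gsq ((T.map w).prod * M) :=
          (hgood x).2.1 _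
      _ ≤ (c x) ^ 2 * (((T.map c).prod) ^ 2 * gsq M) := by
          exact mul_le_mul_of_nonneg_left (ih M) (by positivity)
      _ = (c x * (T.map c).prod) ^ 2 * gsq M := by ring

lemma gsq_list_right (hgood : ∀ x, good (w x) (c x)) (L : List Bool) :
    ∀ M, gsq (M * (L.map w).prod) ≤ ((L.map c).prod) ^ 2 * gsq M := by
  induction L with
  | nil => intro M; simp
  | cons x T ih =>
    intro M
    rw [List.map_cons, List.prod_cons, List.map_cons, List.prod_cons, ← Matrix.mul_assoc]
    calc gsq (M * w x * (T.map w).prod) ≤ ((T.map c).prod) ^ 2 * gsq (M * w x) := ih _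
      _ ≤ ((T.map c).prod) ^ 2 * ((c x) ^ 2 * gsq M) := by
          refine mul_le_mul_of_nonneg_left ((hgood x).2.2 M) ?_
          have := weight_nonneg c (fun y => (hgood y).1) T
          positivity
      _ = (c x * (T.map c).prod) ^ 2 * gsq M := by ring

lemma gsq_word (hgood : ∀ x, good (w x) (c x))
    (hH : gsq (w false) ≤ (c false) ^ 2) (L : List Bool) (hfalse : false ∈ L) :
    gsq ((L.map w).prod) ≤ ((L.map c).prod) ^ 2 := by
  induction L with
  | nil => simp at hfalse
  | cons x T ih =>
    rw [List.map_cons, List.prod_cons, List.map_cons, List.prod_cons]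
    by_cases hT : false ∈ T
    · calc gsq (w x * (T.map w).prod) ≤ (c x) ^ 2 * gsq ((T.map w).prod) := by
            simpa using (hgood x).2.1 _
        _ ≤ (c x) ^ 2 * ((T.map c).prod) ^ 2 := by
            exact mul_le_mul_of_nonneg_left (ih hT) (by positivity)
        _ = (c x * (T.map c).prod) ^ 2 := by ring
    · have hx : x = false := by
        rcases List.mem_cons.1 hfalse with h | h
        · exact h.symm
        · exact absurd h hT
      subst hx
      calc gsq (w false * (T.map w).prod) ≤ ((T.map c).prod) ^ 2 * gsq (w false) := by
            simpa using gsq_list_right w c hgood T (w false)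
        _ ≤ ((T.map c).prod) ^ 2 * (c false) ^ 2 := by
            refine mul_le_mul_of_nonneg_left hH ?_
            positivity
        _ = (c false * (T.map c).prod) ^ 2 := by ring

end lists

lemma sum_rpow_le_rpow_sum {ι : Type*} [Fintype ι] (f : ι → ℝ) (hf : ∀ i, 0 ≤ f i)
    {q : ℝ} (hq : 1 ≤ q) : ∑ i, f i ^ q ≤ (∑ i, f i) ^ q := by
  have hs : 0 ≤ ∑ i, f i := Finset.sum_nonneg fun i _ => hf i
  have key : ∀ i : ι, f i ^ q ≤ (∑ j, f j) ^ (q - 1) * f i := by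
    intro i
    rcases eq_or_lt_of_le (hf i) with h | h
    · rw [← h, Real.zero_rpow (by linarith)]
      positivity
    · have hle : f i ≤ ∑ j, f j := Finset.single_le_sum (fun j _ => hf j) (Finset.mem_univ i)
      calc f i ^ q = f i ^ (q - 1) * f i := by
            nth_rewrite 3 [← Real.rpow_one (f i)]
            rw [← Real.rpow_add h]
            ring_nf
        _ ≤ (∑ j, f j) ^ (q - 1) * f i :=
            mul_le_mul_of_nonneg_right (Real.rpow_le_rpow (hf i) hle (by linarith)) (hf i)
  calc ∑ i, f i ^ q ≤ ∑ i, (∑ j, f j) ^ (q - 1) * f i :=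
        Finset.sum_le_sum fun i _ => key i
    _ = (∑ j, f j) ^ (q - 1) * ∑ i, f i := by rw [Finset.mul_sum]
    _ ≤ (∑ j, f j) ^ q := by
        rcases eq_or_lt_of_le hs with h0 | h0
        · rw [← h0, mul_zero]
          positivity
        · nth_rewrite 2 [← Real.rpow_one (∑ j, f j)]
          rw [← Real.rpow_add h0]
          ring_nf
          exact le_refl _

lemma unitary_conj_pow {U D : Matrix (Fin N) (Fin N) ℂ}
    (hU1 : star U * U = 1) {j : ℕ} (hj : 1 ≤ j) :
    (U * D * star U) ^ j = U * D ^ j * star U := by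
  induction j with
  | zero => omega
  | succ t ih =>
    rcases Nat.eq_or_lt_of_le hj with h | h
    · simp [← h]
    · have ht : 1 ≤ t := by omega
      rw [pow_succ, ih ht, pow_succ]
      have : U * D ^ t * star U * (U * D * star U)
          = U * D ^ t * (star U * U) * D * star U := by
        simp only [Matrix.mul_assoc]
      rw [this, hU1, Matrix.mul_one]
      simp only [Matrix.mul_assoc]

lemma gsq_hermitian_pow {Y : Matrix (Fin N) (Fin N) ℂ} (hY : Y.IsHermitian) {j : ℕ}
    (hj : 1 ≤ j) : gsq (Y ^ j) = ∑ i, |hY.eigenvalues i| ^ (2 * j) := by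
  set U : Matrix (Fin N) (Fin N) ℂ := (hY.eigenvectorUnitary : Matrix (Fin N) (Fin N) ℂ)
  have hU1 : star U * U = 1 := Unitary.coe_star_mul_self hY.eigenvectorUnitary
  have hU2 : U * star U = 1 := Unitary.coe_mul_star_self hY.eigenvectorUnitary
  have hspec : Y = U * Matrix.diagonal (RCLike.ofReal ∘ hY.eigenvalues) * star U :=
    hY.spectral_theorem
  have hpow : Y ^ j = U * (Matrix.diagonal (RCLike.ofReal ∘ hY.eigenvalues)) ^ j * star U := by
    conv_lhs => rw [hspec]
    exact unitary_conj_pow hU1 hj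
  rw [hpow, Matrix.diagonal_pow, Matrix.mul_assoc,
    gsq_unitary_left hU1, gsq_unitary_right (by rwa [star_star]), gsq_diagonal]
  refine Finset.sum_congr rfl fun i _ => ?_
  rw [Pi.pow_apply]
  have : ‖(Function.comp (RCLike.ofReal (K := ℂ)) hY.eigenvalues i) ^ j‖
      = |hY.eigenvalues i| ^ j := by
    rw [norm_pow, Function.comp_apply]
    congr 1
    exact RCLike.norm_ofReal _
  rw [this, ← pow_mul, mul_comm j 2]

lemma good_hermitian {Y : Matrix (Fin N) (Fin N) ℂ} (hY : Y.IsHermitian) {c : ℝ}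
    (hc : 0 ≤ c) (hev : ∀ i, |hY.eigenvalues i| ≤ c) : good Y c := by
  have hU1 : star (hY.eigenvectorUnitary : Matrix (Fin N) (Fin N) ℂ)
      * (hY.eigenvectorUnitary : Matrix (Fin N) (Fin N) ℂ) = 1 :=
    Unitary.coe_star_mul_self hY.eigenvectorUnitary
  have hU2 : (hY.eigenvectorUnitary : Matrix (Fin N) (Fin N) ℂ)
      * star (hY.eigenvectorUnitary : Matrix (Fin N) (Fin N) ℂ) = 1 :=
    Unitary.coe_mul_star_self hY.eigenvectorUnitary
  have := good_of_spectral (d := RCLike.ofReal ∘ hY.eigenvalues) hU1 hU2 hc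
    (fun i => by simpa [RCLike.norm_ofReal] using hev i)
  have hspec : Y = (hY.eigenvectorUnitary : Matrix (Fin N) (Fin N) ℂ)
      * Matrix.diagonal (RCLike.ofReal ∘ hY.eigenvalues)
      * star (hY.eigenvectorUnitary : Matrix (Fin N) (Fin N) ℂ) := hY.spectral_theorem
  rwa [← hspec] at this



/-- Hölder-type bound on the trace of an alternating word
`Y^{n₁} H^{m₁} ⋯ Y^{n_s} H^{m_s}` in two Hermitian matrices, in terms of the
eigenvalues (`tr |Y|^{p+1} = ∑ i |λ_i(Y)|^{p+1}` and `tr H² = ∑ i λ_i(H)²`). -/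
theorem trace_word_holder_bound
    {N p s : ℕ} (hp : 3 ≤ p) (hs1 : 1 ≤ s) (hsp : s ≤ p)
    (n m : Fin s → ℕ) (hn : ∀ i, 1 ≤ n i) (hm : ∀ i, 1 ≤ m i)
    (hsum : (∑ i, n i) + (∑ i, m i) = p)
    (hk : (∑ i, n i) ≤ p - 1)
    (Y H : Matrix (Fin N) (Fin N) ℂ)
    (hY : Y.IsHermitian) (hH : H.IsHermitian) :
    ‖((List.ofFn fun i : Fin s => Y ^ n i * H ^ m i).prod).trace‖ ≤
      (∑ i, |hY.eigenvalues i| ^ (p + 1)) ^ ((∑ i, n i : ℝ) / (p + 1)) *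
      (∑ i, (hH.eigenvalues i) ^ 2) ^ (((p : ℝ) - (∑ i, n i)) / 2) := by

  set k := ∑ i, n i with hk_def
  set mm := ∑ i, m i with hmm_def
  set A := ∑ i, |hY.eigenvalues i| ^ (p + 1) with hA_def
  set B := ∑ i, (hH.eigenvalues i) ^ 2 with hB_def
  have hA0 : 0 ≤ A := Finset.sum_nonneg fun i _ => by positivity
  have hB0 : 0 ≤ B := Finset.sum_nonneg fun i _ => by positivity
  set a := A ^ (((p : ℝ) + 1))⁻¹ with ha_def
  set b := Real.sqrt B with hb_def
  have ha0 : 0 ≤ a := Real.rpow_nonneg hA0 _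
  have hb0 : 0 ≤ b := Real.sqrt_nonneg _
  have hp1pos : (0:ℝ) < (p:ℝ) + 1 := by positivity
  have hbB : b ^ 2 = B := Real.sq_sqrt hB0
  have hgsqH : gsq H = B := by
    have h1 := gsq_hermitian_pow hH (le_refl 1)
    rw [pow_one] at h1
    rw [h1, hB_def]
    exact Finset.sum_congr rfl fun i _ => by rw [mul_one, sq_abs]
  have hk1 : 1 ≤ k := le_trans (hn ⟨0, hs1⟩) (Finset.single_le_sum (fun i _ => Nat.zero_le _) (Finset.mem_univ _))
  have hsmm : s ≤ mm := by
    calc s = ∑ _i : Fin s, 1 := by simp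
      _ ≤ mm := Finset.sum_le_sum fun i _ => hm i
  have hmm1 : 1 ≤ mm := le_trans hs1 hsmm
  have hkp : k + mm = p := hsum
  have hevH : ∀ i, |hH.eigenvalues i| ≤ b := by
    intro i
    have h1 : (hH.eigenvalues i) ^ 2 ≤ B :=
      Finset.single_le_sum (f := fun j => (hH.eigenvalues j) ^ 2)
        (fun j _ => by positivity) (Finset.mem_univ i)
    calc |hH.eigenvalues i| = Real.sqrt ((hH.eigenvalues i) ^ 2) := (Real.sqrt_sq_eq_abs _).symm
      _ ≤ b := Real.sqrt_le_sqrt h1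
  have hevY : ∀ i, |hY.eigenvalues i| ≤ a := by
    intro i
    have h1 : |hY.eigenvalues i| ^ (p + 1) ≤ A :=
      Finset.single_le_sum (f := fun j => |hY.eigenvalues j| ^ (p + 1))
        (fun j _ => by positivity) (Finset.mem_univ i)
    have h2 : |hY.eigenvalues i| = (|hY.eigenvalues i| ^ (p + 1) : ℝ) ^ (((p:ℝ) + 1))⁻¹ := by
      rw [← Real.rpow_natCast |hY.eigenvalues i| (p + 1),
        ← Real.rpow_mul (abs_nonneg _)]
      push_cast
      rw [mul_inv_cancel₀ (by positivity), Real.rpow_one]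
    rw [h2, ha_def]
    exact Real.rpow_le_rpow (by positivity) h1 (by positivity)
  have goodY : good Y a := good_hermitian hY ha0 hevY
  have goodH : good H b := good_hermitian hH hb0 hevH
  have key : ‖((List.ofFn fun i : Fin s => Y ^ n i * H ^ m i).prod).trace‖ ≤ a ^ k * b ^ mm := by
    rcases Nat.lt_or_ge mm 2 with hmm2 | hmm2
    · -- single H case: the word is Y ^ k * H
      have hmm_eq : mm = 1 := by omega
      have hs_eq : s = 1 := by omega
      subst hs_eq
      have hm0 : m 0 = 1 := by rw [hmm_def, Fin.sum_univ_one] at hmm_eq; exact hmm_eq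
      have hkn : k = n 0 := by rw [hk_def, Fin.sum_univ_one]
      have hword : (List.ofFn fun i : Fin 1 => Y ^ n i * H ^ m i).prod = Y ^ n 0 * H := by
        simp [List.ofFn_succ, hm0]
      rw [hword, hmm_eq, pow_one, hkn]
      have hq1 : ((p : ℝ) + 1) ≤ (2 * n 0 : ℕ) := by
        have : p + 1 ≤ 2 * n 0 := by omega
        exact_mod_cast this
      set q : ℝ := (2 * n 0 : ℕ) * (((p : ℝ) + 1))⁻¹ with hq_def
      have hq : 1 ≤ q := by
        rw [hq_def, ← div_eq_mul_inv, le_div_iff₀ hp1pos, one_mul]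
        exact hq1
      have hgY : gsq (Y ^ n 0) ≤ (a ^ n 0) ^ 2 := by
        rw [gsq_hermitian_pow hY (hn 0)]
        have hterm : ∀ i, |hY.eigenvalues i| ^ (2 * n 0)
            = (|hY.eigenvalues i| ^ (p + 1) : ℝ) ^ q := by
          intro i
          rw [← Real.rpow_natCast |hY.eigenvalues i| (p + 1), ← Real.rpow_mul (abs_nonneg _),
            ← Real.rpow_natCast |hY.eigenvalues i| (2 * n 0)]
          congr 1
          rw [hq_def]
          push_cast
          field_simp
        have hsum2 : ∑ i, |hY.eigenvalues i| ^ (2 * n 0) ≤ A ^ q := by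
          calc ∑ i, |hY.eigenvalues i| ^ (2 * n 0)
              = ∑ i, (|hY.eigenvalues i| ^ (p + 1) : ℝ) ^ q :=
                Finset.sum_congr rfl fun i _ => hterm i
            _ ≤ A ^ q := sum_rpow_le_rpow_sum _ (fun i => by positivity) hq
        have haq : A ^ q = (a ^ n 0) ^ 2 := by
          rw [ha_def, ← pow_mul, ← Real.rpow_natCast (A ^ (((p : ℝ) + 1))⁻¹) (n 0 * 2),
            ← Real.rpow_mul hA0, hq_def]
          congr 1
          push_cast
          ring
        rw [← haq]
        exact hsum2
      calc ‖(Y ^ n 0 * H).trace‖ ≤ Real.sqrt (gsq (Y ^ n 0)) * Real.sqrt (gsq H) :=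
            trace_CS _ _
        _ ≤ a ^ n 0 * b := by
            refine mul_le_mul ?_ ?_ (Real.sqrt_nonneg _) (by positivity)
            · calc Real.sqrt (gsq (Y ^ n 0)) ≤ Real.sqrt ((a ^ n 0) ^ 2) :=
                  Real.sqrt_le_sqrt hgY
                _ = a ^ n 0 := Real.sqrt_sq (by positivity)
            · rw [hgsqH, hb_def]
    · -- at least two H letters
      obtain ⟨t, rfl⟩ : ∃ t, s = t + 1 := ⟨s - 1, by omega⟩
      set w : Bool → Matrix (Fin N) (Fin N) ℂ := fun x => if x then Y else H with hw_def
      set c : Bool → ℝ := fun x => if x then a else b with hc_def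
      have hgood : ∀ x, good (w x) (c x) := by
        intro x
        cases x
        · simpa [hw_def, hc_def] using goodH
        · simpa [hw_def, hc_def] using goodY
      have hHb : gsq (w false) ≤ (c false) ^ 2 := by
        simp only [hw_def, hc_def, if_neg Bool.false_ne_true]
        rw [hgsqH, hbB]
      have chunkM : ∀ u v : ℕ,
          (((List.replicate u true ++ List.replicate v false).map w).prod) = Y ^ u * H ^ v := by
        intro u v
        rw [List.map_append, List.prod_append, List.map_replicate, List.map_replicate,
          List.prod_replicate, List.prod_replicate]
        simp [hw_def]
      have chunkR : ∀ u v : ℕ,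
          (((List.replicate u true ++ List.replicate v false).map c).prod) = a ^ u * b ^ v := by
        intro u v
        rw [List.map_append, List.prod_append, List.map_replicate, List.map_replicate,
          List.prod_replicate, List.prod_replicate]
        simp [hc_def]
      set L' : List Bool := (List.ofFn fun i : Fin t =>
          List.replicate (n i.castSucc) true ++ List.replicate (m i.castSucc) false).flatten
          ++ (List.replicate (n (Fin.last t)) true
              ++ List.replicate (m (Fin.last t) - 1) false) with hL_def
      have hfrontM : (((List.ofFn fun i : Fin t =>
            List.replicate (n i.castSucc) true ++ List.replicate (m i.castSucc) false).flatten.map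
              w).prod)
          = (List.ofFn fun i : Fin t => Y ^ n i.castSucc * H ^ m i.castSucc).prod := by
        rw [List.map_flatten, List.map_ofFn, List.prod_flatten, List.map_ofFn]
        exact congrArg List.prod (congrArg List.ofFn (funext fun i => chunkM _ _))
      have hW : (List.ofFn fun i : Fin (t+1) => Y ^ n i * H ^ m i).prod
          = (L'.map w).prod * H := by
        rw [List.ofFn_succ', List.prod_concat, hL_def, List.map_append, List.prod_append,
          hfrontM, List.map_append, List.prod_append, List.map_replicate, List.map_replicate,
          List.prod_replicate, List.prod_replicate]
        have hwt : w true = Y := by simp [hw_def]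
        have hwf : w false = H := by simp [hw_def]
        rw [hwt, hwf]
        have hHm : H ^ m (Fin.last t) = H ^ (m (Fin.last t) - 1) * H := by
          conv_lhs => rw [show m (Fin.last t) = (m (Fin.last t) - 1) + 1 from
            (Nat.succ_pred_eq_of_pos (hm _)).symm]
          rw [pow_succ]
        rw [hHm]
        simp only [Matrix.mul_assoc]
      have hfrontR : (((List.ofFn fun i : Fin t =>
            List.replicate (n i.castSucc) true ++ List.replicate (m i.castSucc) false).flatten.map
              c).prod)
          = a ^ (∑ i : Fin t, n i.castSucc) * b ^ (∑ i : Fin t, m i.castSucc) := by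
        rw [List.map_flatten, List.map_ofFn, List.prod_flatten, List.map_ofFn, List.prod_ofFn]
        refine (Finset.prod_congr rfl fun i _ => chunkR (n i.castSucc) (m i.castSucc)).trans ?_
        rw [Finset.prod_mul_distrib, Finset.prod_pow_eq_pow_sum, Finset.prod_pow_eq_pow_sum]
      have hweight : (L'.map c).prod = a ^ k * b ^ (mm - 1) := by
        rw [hL_def, List.map_append, List.prod_append, hfrontR, List.map_append,
          List.prod_append, List.map_replicate, List.map_replicate, List.prod_replicate,
          List.prod_replicate]
        have hct : c true = a := by simp [hc_def]
        have hcf : c false = b := by simp [hc_def]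
        rw [hct, hcf]
        have hkeq : (∑ i : Fin t, n i.castSucc) + n (Fin.last t) = k := by
          rw [hk_def, Fin.sum_univ_castSucc]
        have hmeq : (∑ i : Fin t, m i.castSucc) + (m (Fin.last t) - 1) = mm - 1 := by
          have := hm (Fin.last t)
          have hmm_eq : (∑ i : Fin t, m i.castSucc) + m (Fin.last t) = mm := by
            rw [hmm_def, Fin.sum_univ_castSucc]
          omega
        rw [← hkeq, ← hmeq, pow_add, pow_add]
        ring
      have hmem : false ∈ L' := by
        rw [hL_def]
        by_cases h2 : 2 ≤ m (Fin.last t)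
        · refine List.mem_append_right _ (List.mem_append_right _ ?_)
          rw [List.mem_replicate]
          exact ⟨by omega, rfl⟩
        · have hml : m (Fin.last t) = 1 := by have := hm (Fin.last t); omega
          have ht1 : 1 ≤ t := by
            by_contra ht0
            have ht0' : t = 0 := by omega
            subst ht0'
            have : mm = m (Fin.last 0) := by
              rw [hmm_def, Fin.sum_univ_castSucc]
              simp
            omega
          refine List.mem_append_left _ ?_
          rw [List.mem_flatten]
          refine ⟨List.replicate (n (⟨0, ht1⟩ : Fin t).castSucc) true
            ++ List.replicate (m (⟨0, ht1⟩ : Fin t).castSucc) false, ?_, ?_⟩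
          · rw [List.mem_ofFn]
            exact ⟨⟨0, ht1⟩, rfl⟩
          · refine List.mem_append_right _ ?_
            rw [List.mem_replicate]
            exact ⟨by have := hm (⟨0, ht1⟩ : Fin t).castSucc; omega, rfl⟩
      have hg : gsq ((L'.map w).prod) ≤ ((L'.map c).prod) ^ 2 :=
        gsq_word w c hgood hHb L' hmem
      have hwnn : 0 ≤ a ^ k * b ^ (mm - 1) := by positivity
      calc ‖((List.ofFn fun i : Fin (t+1) => Y ^ n i * H ^ m i).prod).trace‖
          = ‖((L'.map w).prod * H).trace‖ := by rw [hW]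
        _ ≤ Real.sqrt (gsq ((L'.map w).prod)) * Real.sqrt (gsq H) := trace_CS _ _
        _ ≤ (a ^ k * b ^ (mm - 1)) * b := by
            refine mul_le_mul ?_ ?_ (Real.sqrt_nonneg _) hwnn
            · calc Real.sqrt (gsq ((L'.map w).prod))
                  ≤ Real.sqrt (((L'.map c).prod) ^ 2) := Real.sqrt_le_sqrt hg
                _ = a ^ k * b ^ (mm - 1) := by
                    rw [hweight, Real.sqrt_sq hwnn]
            · rw [hgsqH, hb_def]
        _ = a ^ k * b ^ mm := by
            rw [mul_assoc, ← pow_succ]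
            congr 2
            omega
  refine key.trans (le_of_eq ?_)
  have e1 : a ^ k = A ^ ((k : ℝ) / ((p:ℝ) + 1)) := by
    rw [ha_def, ← Real.rpow_natCast (A ^ (((p : ℝ) + 1))⁻¹) k, ← Real.rpow_mul hA0]
    congr 1
    field_simp
  have e2 : b ^ mm = B ^ (((p : ℝ) - (k : ℝ)) / 2) := by
    have hpk : (p : ℝ) - (k : ℝ) = (mm : ℝ) := by
      have := hkp
      push_cast [← this]
      ring
    rw [hpk, hb_def, Real.sqrt_eq_rpow, ← Real.rpow_natCast (B ^ ((1:ℝ)/2)) mm,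
      ← Real.rpow_mul hB0]
    congr 1
    ring
  have e3 : ((k : ℝ)) = ∑ i, (n i : ℝ) := by rw [hk_def]; push_cast; ring
  rw [e1, e2, e3]
end

section
/- For any real number α ≥ 2 and all real x, y: (1/2)|x|^α + (1/2)|y|^α ≥ |(x+y)/2|^α + |(x-y)/2|^α. -/
lemma aux_superadd (a b : ℝ) (ha : 0 ≤ a) (hb : 0 ≤ b) {p : ℝ} (hp : 1 ≤ p) :
    a ^ p + b ^ p ≤ (a + b) ^ p := by
  lift a to NNReal using ha
  lift b to NNReal using hb
  exact_mod_cast NNReal.add_rpow_le_rpow_add a b hp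

lemma aux_convex (a b : ℝ) (ha : 0 ≤ a) (hb : 0 ≤ b) {p : ℝ} (hp : 1 ≤ p) :
    ((1/2) * a + (1/2) * b) ^ p ≤ (1/2) * a ^ p + (1/2) * b ^ p := by
  lift a to NNReal using ha
  lift b to NNReal using hb
  have h := NNReal.rpow_arith_mean_le_arith_mean2_rpow (1/2) (1/2) a b (by ext; simp; norm_num) hp
  exact_mod_cast h

theorem rpow_midpoint_convexity (α : ℝ) (hα : 2 ≤ α) (x y : ℝ) :
    |(x + y) / 2| ^ α + |(x - y) / 2| ^ α ≤ (1 / 2) * |x| ^ α + (1 / 2) * |y| ^ α := by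
  set A := |(x + y) / 2| with hA
  set B := |(x - y) / 2| with hB
  have hq : (1:ℝ) ≤ α / 2 := by linarith
  have hA0 : 0 ≤ A := abs_nonneg _
  have hB0 : 0 ≤ B := abs_nonneg _
  have key : ∀ t : ℝ, 0 ≤ t → (t^2) ^ (α/2) = t ^ α := by
    intro t ht
    rw [← Real.rpow_natCast t 2, ← Real.rpow_mul ht]
    push_cast
    ring_nf
  have h1 : A ^ α + B ^ α ≤ (A^2 + B^2) ^ (α/2) := by
    rw [← key A hA0, ← key B hB0]
    exact aux_superadd _ _ (sq_nonneg A) (sq_nonneg B) hq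
  have h2 : A^2 + B^2 = (1/2) * x^2 + (1/2) * y^2 := by
    rw [hA, hB, sq_abs, sq_abs]; ring
  have h3 : ((1/2) * x^2 + (1/2) * y^2) ^ (α/2)
      ≤ (1/2) * (x^2)^(α/2) + (1/2) * (y^2)^(α/2) :=
    aux_convex _ _ (sq_nonneg x) (sq_nonneg y) hq
  calc A ^ α + B ^ α ≤ ((1/2) * x^2 + (1/2) * y^2) ^ (α/2) := by rw [← h2]; exact h1
    _ ≤ (1/2) * (x^2)^(α/2) + (1/2) * (y^2)^(α/2) := h3
    _ = (1/2) * |x| ^ α + (1/2) * |y| ^ α := by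
        rw [← sq_abs x, ← sq_abs y, key |x| (abs_nonneg x), key |y| (abs_nonneg y)]
end

section
/- Let α ≥ 2, N ≥ 1, f: ℝ → ℝ a 1-Lipschitz function, and 1 ≤ l ≤ m ≤ N. Define g(λ) = (1/N)·Σ_{i=l}^m f(λ̄_i), where λ̄₁ ≤ ... ≤ λ̄_N is the nondecreasing rearrangement of the coordinates of λ ∈ ℝ^N. Then g is N^{-1/α}-Lipschitz with respect to the norm ‖x‖_α = (Σ|x_i|^α)^{1/α}, i.e. |g(λ) - g(μ)| ≤ N^{-1/α}‖λ - μ‖_α for all λ, μ ∈ ℝ^N. -/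
open Finset

/-- The nondecreasing rearrangement of the coordinates of `lam`. -/
noncomputable def sortedCoords {N : ℕ} (lam : Fin N → ℝ) : Fin N → ℝ :=
  lam ∘ Tuple.sort lam

lemma sortedCoords_monotone {N : ℕ} (lam : Fin N → ℝ) : Monotone (sortedCoords lam) :=
  Tuple.monotone_sort lam

/-- Hardy–Littlewood–Pólya rearrangement inequality in `ℓ²`. -/
lemma sum_sq_sorted_le {N : ℕ} (lam mu : Fin N → ℝ) :
    ∑ i, (sortedCoords lam i - sortedCoords mu i) ^ 2 ≤ ∑ i, (lam i - mu i) ^ 2 := by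
  have hA : ∑ i, (sortedCoords lam i) ^ 2 = ∑ i, (lam i) ^ 2 :=
    Equiv.sum_comp (Tuple.sort lam) (fun j => (lam j) ^ 2)
  have hB : ∑ i, (sortedCoords mu i) ^ 2 = ∑ i, (mu i) ^ 2 :=
    Equiv.sum_comp (Tuple.sort mu) (fun j => (mu j) ^ 2)
  have hC : ∑ i, lam i * mu i ≤ ∑ i, sortedCoords lam i * sortedCoords mu i := by
    have h1 : ∑ i, lam i * mu i = ∑ i, lam (Tuple.sort lam i) * mu (Tuple.sort lam i) :=
      (Equiv.sum_comp (Tuple.sort lam) (fun j => lam j * mu j)).symm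
    have hmono : Monovary (sortedCoords lam) (sortedCoords mu) :=
      (sortedCoords_monotone lam).monovary (sortedCoords_monotone mu)
    calc ∑ i, lam i * mu i
        = ∑ i, sortedCoords lam i *
            sortedCoords mu (((Tuple.sort lam).trans (Tuple.sort mu).symm) i) := by
          rw [h1]
          refine Finset.sum_congr rfl fun i _ => ?_
          simp [sortedCoords]
      _ ≤ _ := hmono.sum_mul_comp_perm_le_sum_mul
  have expand : ∀ a b : Fin N → ℝ, ∑ i : Fin N, (a i - b i) ^ 2 =
      ∑ i : Fin N, ((a i) ^ 2 + (b i) ^ 2) - 2 * ∑ i : Fin N, a i * b i := by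
    intro a b
    rw [Finset.mul_sum, ← Finset.sum_sub_distrib]
    exact Finset.sum_congr rfl fun i _ => by ring
  rw [expand, expand]
  have hAB : ∑ i : Fin N, ((sortedCoords lam i) ^ 2 + (sortedCoords mu i) ^ 2)
      = ∑ i : Fin N, ((lam i) ^ 2 + (mu i) ^ 2) := by
    rw [Finset.sum_add_distrib, Finset.sum_add_distrib, hA, hB]
  linarith

theorem partial_sum_sorted_lipschitz
    {N : ℕ} (hN : 1 ≤ N) (α : ℝ) (hα : 2 ≤ α)
    (f : ℝ → ℝ) (hf : LipschitzWith 1 f)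
    (l m : ℕ) (hl : 1 ≤ l) (hlm : l ≤ m) (hmN : m ≤ N)
    (lam mu : Fin N → ℝ) :
    |(1 / (N : ℝ)) * ∑ i ∈ Finset.univ.filter
        (fun i : Fin N => l ≤ (i : ℕ) + 1 ∧ (i : ℕ) + 1 ≤ m),
        f (sortedCoords lam i) -
      (1 / (N : ℝ)) * ∑ i ∈ Finset.univ.filter
        (fun i : Fin N => l ≤ (i : ℕ) + 1 ∧ (i : ℕ) + 1 ≤ m),
        f (sortedCoords mu i)| ≤
      (N : ℝ) ^ (-(1 / α)) * (∑ i, |lam i - mu i| ^ α) ^ (1 / α) := by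
  have hN0 : (0 : ℝ) < N := by exact_mod_cast hN
  have hα0 : (0 : ℝ) < α := by linarith
  set S := Finset.univ.filter (fun i : Fin N => l ≤ (i : ℕ) + 1 ∧ (i : ℕ) + 1 ≤ m) with hS
  set d : Fin N → ℝ := fun i => |sortedCoords lam i - sortedCoords mu i| with hd
  set e : Fin N → ℝ := fun i => |lam i - mu i| with he
  set T := ∑ i, d i with hT
  set E := ∑ i, e i ^ α with hE
  have hEnn : 0 ≤ E := sum_nonneg fun i _ => Real.rpow_nonneg (abs_nonneg _) _
  have hT0 : 0 ≤ T := sum_nonneg fun i _ => abs_nonneg _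
  -- Step A : the LHS is at most (1/N) * T
  have hfd : ∀ i, |f (sortedCoords lam i) - f (sortedCoords mu i)| ≤ d i := by
    intro i
    have := hf.dist_le_mul (sortedCoords lam i) (sortedCoords mu i)
    simpa [Real.dist_eq] using this
  have hstepA : |(1 / (N : ℝ)) * ∑ i ∈ S, f (sortedCoords lam i) -
      (1 / (N : ℝ)) * ∑ i ∈ S, f (sortedCoords mu i)| ≤ (1 / N) * T := by
    rw [← mul_sub, abs_mul, ← Finset.sum_sub_distrib, abs_of_pos (by positivity : (0:ℝ) < 1 / N)]
    have hsum : |∑ i ∈ S, (f (sortedCoords lam i) - f (sortedCoords mu i))| ≤ T :=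
      calc |∑ i ∈ S, (f (sortedCoords lam i) - f (sortedCoords mu i))|
          ≤ ∑ i ∈ S, |f (sortedCoords lam i) - f (sortedCoords mu i)| :=
            Finset.abs_sum_le_sum_abs _ _
        _ ≤ ∑ i ∈ S, d i := Finset.sum_le_sum fun i _ => hfd i
        _ ≤ T := Finset.sum_le_sum_of_subset_of_nonneg (Finset.subset_univ S)
            (fun i _ _ => abs_nonneg _)
    exact mul_le_mul_of_nonneg_left hsum (by positivity)
  -- Step B : T ^ α ≤ N ^ (α - 1) * E
  have hT2 : T ^ (2:ℕ) ≤ (N : ℝ) * ∑ i, d i ^ (2:ℕ) := by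
    have := sq_sum_le_card_mul_sum_sq (s := (univ : Finset (Fin N))) (f := d)
    simpa using this
  have hd2e2 : ∑ i, d i ^ (2:ℕ) ≤ ∑ i, e i ^ (2:ℕ) := by
    simpa [hd, he, sq_abs] using sum_sq_sorted_le lam mu
  have hHolder : (∑ i, e i ^ (2:ℕ)) ^ (α / 2) ≤ (N : ℝ) ^ (α / 2 - 1) * E := by
    have h := Real.rpow_sum_le_const_mul_sum_rpow_of_nonneg (s := (univ : Finset (Fin N)))
      (f := fun i => e i ^ (2:ℕ)) (p := α / 2) (by linarith) (fun i _ => by positivity)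
    have h2 : ∀ i : Fin N, ((e i ^ (2:ℕ) : ℝ)) ^ (α / 2) = e i ^ α := by
      intro i
      rw [← Real.rpow_natCast (e i) 2, ← Real.rpow_mul (abs_nonneg _)]
      norm_num
      rw [show (2:ℝ) * (α / 2) = α from by ring]
    calc (∑ i, e i ^ (2:ℕ)) ^ (α / 2)
        ≤ (#(univ : Finset (Fin N)) : ℝ) ^ (α / 2 - 1) * ∑ i, (e i ^ (2:ℕ) : ℝ) ^ (α / 2) := h
      _ = (N : ℝ) ^ (α / 2 - 1) * E := by
          rw [Finset.card_univ, Fintype.card_fin]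
          congr 1
          exact Finset.sum_congr rfl fun i _ => h2 i
  have hTα : T ^ α ≤ (N : ℝ) ^ (α - 1) * E := by
    have he2nn : (0:ℝ) ≤ ∑ i, e i ^ (2:ℕ) := sum_nonneg fun i _ => by positivity
    calc T ^ α = (T ^ (2:ℕ)) ^ (α / 2) := by
          rw [← Real.rpow_natCast T 2, ← Real.rpow_mul hT0]
          norm_num
          rw [show (2:ℝ) * (α / 2) = α from by ring]
      _ ≤ ((N : ℝ) * ∑ i, e i ^ (2:ℕ)) ^ (α / 2) := by
          apply Real.rpow_le_rpow (by positivity) _ (by positivity)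
          calc T ^ (2:ℕ) ≤ (N : ℝ) * ∑ i, d i ^ (2:ℕ) := hT2
            _ ≤ (N : ℝ) * ∑ i, e i ^ (2:ℕ) := by
                exact mul_le_mul_of_nonneg_left hd2e2 (le_of_lt hN0)
      _ = (N : ℝ) ^ (α / 2) * (∑ i, e i ^ (2:ℕ)) ^ (α / 2) :=
          Real.mul_rpow (le_of_lt hN0) he2nn
      _ ≤ (N : ℝ) ^ (α / 2) * ((N : ℝ) ^ (α / 2 - 1) * E) :=
          mul_le_mul_of_nonneg_left hHolder (Real.rpow_nonneg (le_of_lt hN0) _)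
      _ = (N : ℝ) ^ (α - 1) * E := by
          rw [← mul_assoc, ← Real.rpow_add hN0]
          ring_nf
  -- Step C : conclude
  have key : ((1 / (N : ℝ)) * T) ^ α ≤ ((N : ℝ) ^ (-(1 / α)) * E ^ (1 / α)) ^ α := by
    have hL : ((1 / (N : ℝ)) * T) ^ α = (N : ℝ) ^ (-α) * T ^ α := by
      rw [Real.mul_rpow (by positivity) hT0, one_div, Real.inv_rpow (le_of_lt hN0),
        ← Real.rpow_neg (le_of_lt hN0)]
    have hR : ((N : ℝ) ^ (-(1 / α)) * E ^ (1 / α)) ^ α = (N : ℝ) ^ (-1 : ℝ) * E := by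
      rw [Real.mul_rpow (Real.rpow_nonneg (le_of_lt hN0) _) (Real.rpow_nonneg hEnn _),
        ← Real.rpow_mul (le_of_lt hN0), ← Real.rpow_mul hEnn]
      rw [neg_mul, one_div, inv_mul_cancel₀ hα0.ne', Real.rpow_one]
    rw [hL, hR]
    calc (N : ℝ) ^ (-α) * T ^ α ≤ (N : ℝ) ^ (-α) * ((N : ℝ) ^ (α - 1) * E) :=
          mul_le_mul_of_nonneg_left hTα (Real.rpow_nonneg (le_of_lt hN0) _)
      _ = (N : ℝ) ^ (-1 : ℝ) * E := by
          rw [← mul_assoc, ← Real.rpow_add hN0]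
          ring_nf
  have hRHS0 : 0 ≤ (N : ℝ) ^ (-(1 / α)) * E ^ (1 / α) := by positivity
  calc |(1 / (N : ℝ)) * ∑ i ∈ S, f (sortedCoords lam i) -
      (1 / (N : ℝ)) * ∑ i ∈ S, f (sortedCoords mu i)|
      ≤ (1 / N) * T := hstepA
    _ = (((1 / (N : ℝ)) * T) ^ α) ^ (1 / α) := by
        rw [← Real.rpow_mul (by positivity), mul_one_div, div_self hα0.ne', Real.rpow_one]
    _ ≤ (((N : ℝ) ^ (-(1 / α)) * E ^ (1 / α)) ^ α) ^ (1 / α) :=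
        Real.rpow_le_rpow (Real.rpow_nonneg (by positivity) _) key (by positivity)
    _ = (N : ℝ) ^ (-(1 / α)) * E ^ (1 / α) := by
        rw [← Real.rpow_mul hRHS0, mul_one_div, div_self hα0.ne', Real.rpow_one]
end

section
/- Let p ≥ 2 be an even integer and define φ(λ) = (1 - 2^{1/p - 1})·|Σᵢ λᵢ| + 2^{1/p - 1}·Σᵢ |λᵢ| for λ ∈ ℝ^n. Then for every n ≥ 1 and every λ ∈ ℝ^n with Σᵢ λᵢ^p = 1, one has φ(λ) ≥ 1, and the value 1 is attained at λ = (1, 0, ..., 0). Hence inf{φ(λ) : n ≥ 1, λ ∈ ℝ^n, ‖λ‖_p = 1} = 1. -/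
open Finset

/-- The functional `φ(λ) = (1 - 2^{1/p-1})|∑ᵢ λᵢ| + 2^{1/p-1} ∑ᵢ |λᵢ|`. -/
noncomputable def phiFun (p : ℕ) {n : ℕ} (lam : Fin n → ℝ) : ℝ :=
  (1 - (2 : ℝ) ^ ((1 : ℝ) / p - 1)) * |∑ i, lam i| +
    (2 : ℝ) ^ ((1 : ℝ) / p - 1) * ∑ i, |lam i|

/-- Sum of p-th powers is at most the p-th power of the sum, for nonneg reals. -/
lemma aux_sum_pow_le_pow_sum {ι : Type*} (s : Finset ι) (f : ι → ℝ)
    (hf : ∀ i ∈ s, 0 ≤ f i) {n : ℕ} (hn : n ≠ 0) :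
    ∑ i ∈ s, f i ^ n ≤ (∑ i ∈ s, f i) ^ n := by
  induction s using Finset.cons_induction with
  | empty => simp [zero_pow hn]
  | cons a s ha ih =>
    rw [Finset.sum_cons, Finset.sum_cons]
    have h1 : ∑ i ∈ s, f i ^ n ≤ (∑ i ∈ s, f i) ^ n :=
      ih fun i hi => hf i (Finset.mem_cons_of_mem hi)
    have h2 : f a ^ n + (∑ i ∈ s, f i) ^ n ≤ (f a + ∑ i ∈ s, f i) ^ n :=
      pow_add_pow_le (hf a (Finset.mem_cons_self a s))
        (Finset.sum_nonneg fun i hi => hf i (Finset.mem_cons_of_mem hi)) hn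
    linarith

/-- Key two-variable inequality. -/
lemma aux_key (p : ℕ) (hp : 2 ≤ p) (M m : ℝ) (hm : 0 ≤ m) (hMm : m ≤ M)
    (hS : 1 ≤ M ^ p + m ^ p) :
    1 ≤ M + ((2 : ℝ) ^ ((1 : ℝ) / p) - 1) * m := by
  have hM : 0 ≤ M := hm.trans hMm
  have hp0 : (0 : ℝ) < p := by positivity
  have hp1 : (1 : ℝ) ≤ (p : ℝ) - 1 := by
    have : (2 : ℝ) ≤ (p : ℝ) := by exact_mod_cast hp
    linarith
  have hpm1 : (0 : ℝ) < (p : ℝ) - 1 := by linarith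
  set β : ℝ := (2 : ℝ) ^ ((1 : ℝ) / p) - 1 with hβ
  have hβpos : 0 < β := by
    have : (1 : ℝ) < (2 : ℝ) ^ ((1 : ℝ) / p) :=
      Real.one_lt_rpow_iff_of_pos (by norm_num) |>.mpr (Or.inl ⟨by norm_num, by positivity⟩)
    rw [hβ]; linarith
  set S : ℝ := M ^ p + m ^ p with hSdef
  have hS0 : (0 : ℝ) < S := lt_of_lt_of_le one_pos hS
  set D : ℝ := S ^ (((p : ℝ) - 1) / p) with hD
  have hD0 : 0 < D := Real.rpow_pos_of_pos hS0 _
  -- cast p-1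
  have hcast : ((p - 1 : ℕ) : ℝ) = (p : ℝ) - 1 := by
    have : 1 ≤ p := by omega
    push_cast [this]; ring
  -- h1 : M^(p-1) ≤ D
  have hMrw : M ^ (p - 1) = (M ^ p) ^ (((p : ℝ) - 1) / p) := by
    rw [← Real.rpow_natCast M p, ← Real.rpow_natCast M (p - 1),
      ← Real.rpow_mul hM]
    congr 1
    rw [hcast]
    field_simp
  have h1 : M ^ (p - 1) ≤ D := by
    rw [hMrw, hD]
    apply Real.rpow_le_rpow (by positivity) (by nlinarith [pow_nonneg hm p]) (by positivity)
  -- h2 : M^(p-1) + m^(p-1) ≤ 2^(1/p) * D   (Hölder / power mean)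
  have h2 : M ^ (p - 1) + m ^ (p - 1) ≤ (2 : ℝ) ^ ((1 : ℝ) / p) * D := by
    have hP1 : (1 : ℝ) ≤ (p : ℝ) / ((p : ℝ) - 1) := by
      rw [le_div_iff₀ hpm1]; linarith
    have hh := Real.inner_le_weight_mul_Lp_of_nonneg (Finset.univ : Finset (Fin 2)) hP1
      (fun _ => 1) ![M ^ (p - 1), m ^ (p - 1)] (fun _ => zero_le_one)
      (fun i => by fin_cases i <;> simp <;> positivity)
    simp only [Fin.sum_univ_two, Matrix.cons_val_zero, Matrix.cons_val_one, Matrix.head_cons,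
      one_mul] at hh
    have hrw : ∀ x : ℝ, 0 ≤ x →
        (x ^ (p - 1)) ^ ((p : ℝ) / ((p : ℝ) - 1)) = x ^ p := by
      intro x hx
      rw [← Real.rpow_natCast x (p - 1), ← Real.rpow_mul hx, hcast]
      rw [show ((p : ℝ) - 1) * ((p : ℝ) / ((p : ℝ) - 1)) = (p : ℝ) by field_simp]
      exact Real.rpow_natCast x p
    rw [hrw M hM, hrw m hm] at hh
    have hexp1 : (1 : ℝ) - ((p : ℝ) / ((p : ℝ) - 1))⁻¹ = (1 : ℝ) / p := by
      rw [inv_div]; field_simp; ring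
    have hexp2 : ((p : ℝ) / ((p : ℝ) - 1))⁻¹ = ((p : ℝ) - 1) / p := by
      rw [inv_div]
    rw [hexp1, hexp2] at hh
    convert hh using 2
    norm_num
  -- S ≤ D * (M + β * m)
  have h3 : M ^ (p - 1) * M = M ^ p := by
    rw [← pow_succ]; congr 1; omega
  have h4 : m ^ (p - 1) * m = m ^ p := by
    rw [← pow_succ]; congr 1; omega
  have h2' : M ^ (p - 1) + m ^ (p - 1) ≤ (1 + β) * D := by
    have : (1 : ℝ) + β = (2 : ℝ) ^ ((1 : ℝ) / p) := by rw [hβ]; ring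
    rw [this]; exact h2
  have hmain : S ≤ D * (M + β * m) := by
    have e1 : 0 ≤ (D - M ^ (p - 1)) * (M - m) :=
      mul_nonneg (by linarith) (by linarith)
    have e2 : 0 ≤ ((1 + β) * D - (M ^ (p - 1) + m ^ (p - 1))) * m :=
      mul_nonneg (by linarith) hm
    nlinarith [h3, h4]
  -- D ≤ S since S ≥ 1 and exponent ≤ 1
  have hDS : D ≤ S := by
    have : S ^ (((p : ℝ) - 1) / p) ≤ S ^ (1 : ℝ) := by
      apply Real.rpow_le_rpow_of_exponent_le hS
      rw [div_le_one hp0]; linarith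
    rwa [Real.rpow_one] at this
  have hX0 : 0 ≤ M + β * m := by positivity
  have : S ≤ S * (M + β * m) := hmain.trans (mul_le_mul_of_nonneg_right hDS hX0)
  nlinarith

/-- Main lower bound. -/
lemma aux_phi_ge (p : ℕ) (hp : 2 ≤ p) (hpe : Even p) {n : ℕ} (lam : Fin n → ℝ)
    (hlam : ∑ i, lam i ^ p = 1) : 1 ≤ phiFun p lam := by
  set c : ℝ := (2 : ℝ) ^ ((1 : ℝ) / p - 1) with hc
  have hp0 : (0 : ℝ) < p := by positivity
  have hc0 : 0 < c := Real.rpow_pos_of_pos (by norm_num) _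
  have hc1 : c ≤ 1 := by
    apply Real.rpow_le_one_of_one_le_of_nonpos (by norm_num)
    have : (1 : ℝ) / p ≤ 1 := by
      rw [div_le_one hp0]; exact_mod_cast by omega
    linarith
  have h2c : 2 * c = (2 : ℝ) ^ ((1 : ℝ) / p) := by
    rw [hc, show (1 : ℝ) / p - 1 = 1 / p + (-1) by ring, Real.rpow_add (by norm_num),
      Real.rpow_neg_one]
    ring
  set Pos : ℝ := ∑ i, max (lam i) 0 with hPos
  set Neg : ℝ := ∑ i, max (-lam i) 0 with hNeg
  have hPos0 : 0 ≤ Pos := Finset.sum_nonneg fun i _ => le_max_right _ _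
  have hNeg0 : 0 ≤ Neg := Finset.sum_nonneg fun i _ => le_max_right _ _
  have hsum : ∑ i, lam i = Pos - Neg := by
    rw [hPos, hNeg, ← Finset.sum_sub_distrib]
    exact Finset.sum_congr rfl fun i _ => (max_zero_sub_max_neg_zero_eq_self (lam i)).symm
  have habs : ∑ i, |lam i| = Pos + Neg := by
    rw [hPos, hNeg, ← Finset.sum_add_distrib]
    exact Finset.sum_congr rfl fun i _ => (max_zero_add_max_neg_zero_eq_abs_self (lam i)).symm
  have hple : (1 : ℝ) ≤ Pos ^ p + Neg ^ p := by
    have hsplit : ∀ i : Fin n, lam i ^ p = max (lam i) 0 ^ p + max (-lam i) 0 ^ p := by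
      intro i
      rcases le_total 0 (lam i) with h | h
      · rw [max_eq_left h, max_eq_right (by linarith), zero_pow (by omega), add_zero]
      · rw [max_eq_right h, max_eq_left (by linarith), zero_pow (by omega), zero_add,
          hpe.neg_pow]
    calc (1 : ℝ) = ∑ i, lam i ^ p := hlam.symm
      _ = ∑ i, (max (lam i) 0 ^ p + max (-lam i) 0 ^ p) :=
          Finset.sum_congr rfl fun i _ => hsplit i
      _ = (∑ i, max (lam i) 0 ^ p) + ∑ i, max (-lam i) 0 ^ p := Finset.sum_add_distrib
      _ ≤ Pos ^ p + Neg ^ p := by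
          gcongr
          · exact aux_sum_pow_le_pow_sum _ _ (fun i _ => le_max_right _ _) (by omega)
          · exact aux_sum_pow_le_pow_sum _ _ (fun i _ => le_max_right _ _) (by omega)
  set M : ℝ := max Pos Neg with hM
  set m : ℝ := min Pos Neg with hm
  have hm0 : 0 ≤ m := le_min hPos0 hNeg0
  have hmM : m ≤ M := min_le_max
  have hMp : M ^ p + m ^ p = Pos ^ p + Neg ^ p := by
    rcases le_total Pos Neg with h | h
    · rw [hM, hm, max_eq_right h, min_eq_left h]; ring
    · rw [hM, hm, max_eq_left h, min_eq_right h]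
  have hkey := aux_key p hp M m hm0 hmM (by rw [hMp]; exact hple)
  have habs2 : |Pos - Neg| = M - m := by
    rw [hM, hm, ← max_sub_min_eq_abs, max_comm Neg Pos, min_comm Neg Pos]
  have hMm : Pos + Neg = M + m := by
    rw [hM, hm]
    rcases le_total Pos Neg with h | h
    · rw [max_eq_right h, min_eq_left h]; ring
    · rw [max_eq_left h, min_eq_right h]
  have hphi : phiFun p lam = M + (2 * c - 1) * m := by
    rw [phiFun, ← hc, hsum, habs, habs2, hMm]; ring
  rw [hphi, ← h2c] at *
  rw [h2c] at hkey ⊢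
  linarith [hkey]

theorem phiFun_ge_one_and_infimum
    (p : ℕ) (hp : 2 ≤ p) (hpe : Even p) :
    (∀ (n : ℕ), 1 ≤ n → ∀ lam : Fin n → ℝ,
        ∑ i, lam i ^ p = 1 → 1 ≤ phiFun p lam) ∧
      IsLeast {x : ℝ | ∃ (n : ℕ) (lam : Fin n → ℝ),
          1 ≤ n ∧ ∑ i, lam i ^ p = 1 ∧ x = phiFun p lam} 1 := by
  constructor
  · intro n _ lam hlam
    exact aux_phi_ge p hp hpe lam hlam
  · constructor
    · refine ⟨1, fun _ => 1, le_refl 1, by simp, ?_⟩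
      simp [phiFun]
    · rintro x ⟨n, lam, hn, hlam, rfl⟩
      exact aux_phi_ge p hp hpe lam hlam
end

section
/- Let α ∈ (0, 2) and let A be an n×n Hermitian matrix with eigenvalues λ₁,...,λ_n. Suppose p ≥ 2 is an even integer with α ≤ p and tr(A^p) = 1. Then Σ_{i,j} |A_{ij}|^α ≥ 1. -/
open Finset

private lemma conj_pow_aux {n : ℕ} (U D : Matrix (Fin n) (Fin n) ℂ)
    (h1 : U * star U = 1) (h2 : star U * U = 1) (k : ℕ) :
    (U * D * star U) ^ k = U * D ^ k * star U := by
  induction k with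
  | zero => simp [h1]
  | succ k ih =>
      rw [pow_succ, ih, pow_succ]
      simp only [mul_assoc]
      rw [← mul_assoc (star U) U, h2, one_mul]

private lemma sum_pow_le_pow_sum' {n : ℕ} (f : Fin n → ℝ) (hf : ∀ i, 0 ≤ f i) (m : ℕ)
    (hm : 1 ≤ m) : ∑ i, f i ^ m ≤ (∑ i, f i) ^ m := by
  have hS : ∀ i, f i ≤ ∑ j, f j := fun i =>
    Finset.single_le_sum (fun j _ => hf j) (mem_univ i)
  have hS0 : 0 ≤ ∑ j, f j := Finset.sum_nonneg fun j _ => hf j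
  calc ∑ i, f i ^ m ≤ ∑ i, f i * (∑ j, f j) ^ (m - 1) := by
        refine Finset.sum_le_sum fun i _ => ?_
        calc f i ^ m = f i ^ (1 + (m - 1)) := by rw [Nat.add_sub_cancel' hm]
          _ = f i * f i ^ (m - 1) := by rw [pow_add, pow_one]
          _ ≤ f i * (∑ j, f j) ^ (m - 1) :=
              mul_le_mul_of_nonneg_left (pow_le_pow_left₀ (hf i) (hS i) _) (hf i)
    _ = (∑ j, f j) ^ (1 + (m - 1)) := by rw [← Finset.sum_mul, pow_add, pow_one]
    _ = (∑ j, f j) ^ m := by rw [Nat.add_sub_cancel' hm]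

theorem sum_entries_rpow_ge_one
    (α : ℝ) (hα0 : 0 < α) (hα2 : α < 2)
    (p : ℕ) (hp : 2 ≤ p) (hpe : Even p) (hαp : α ≤ p)
    {n : ℕ} (A : Matrix (Fin n) (Fin n) ℂ) (hA : A.IsHermitian)
    (htr : (A ^ p).trace = 1) :
    1 ≤ ∑ i, ∑ j, ‖A i j‖ ^ α := by
  classical
  set U : Matrix (Fin n) (Fin n) ℂ := (hA.eigenvectorUnitary : Matrix (Fin n) (Fin n) ℂ)
  have hU1 : U * star U = 1 := (Matrix.mem_unitaryGroup_iff).mp hA.eigenvectorUnitary.2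
  have hU2 : star U * U = 1 := (Matrix.mem_unitaryGroup_iff').mp hA.eigenvectorUnitary.2
  set lam := hA.eigenvalues
  -- trace of any power
  have key : ∀ k : ℕ, (A ^ k).trace = ((∑ i, lam i ^ k : ℝ) : ℂ) := by
    intro k
    have hspec := hA.spectral_theorem
    rw [show A = U * Matrix.diagonal (Complex.ofReal ∘ lam) * star U from hspec,
      conj_pow_aux U _ hU1 hU2 k, Matrix.trace_mul_cycle, hU2, one_mul,
      Matrix.diagonal_pow, Matrix.trace_diagonal]
    push_cast
    rfl
  -- the eigenvalue power sum equals 1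
  have h1 : ∑ i, lam i ^ p = 1 := by
    have := key p
    rw [htr] at this
    exact_mod_cast this.symm
  -- sum of squares of eigenvalues ≥ 1
  obtain ⟨m, hm⟩ := hpe
  have hm1 : 1 ≤ m := by omega
  have hsq : (1 : ℝ) ≤ ∑ i, lam i ^ 2 := by
    have h2 : ∑ i, (lam i ^ 2) ^ m = 1 := by
      rw [← h1]; congr 1; funext i; rw [← pow_mul]; congr 1; omega
    have h3 : (1 : ℝ) ≤ (∑ i, lam i ^ 2) ^ m := by
      rw [← h2]
      exact sum_pow_le_pow_sum' _ (fun i => sq_nonneg _) m hm1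
    by_contra hcon
    push_neg at hcon
    have : (∑ i, lam i ^ 2) ^ m < 1 ^ m := by
      apply pow_lt_pow_left₀ hcon (Finset.sum_nonneg fun i _ => sq_nonneg _) (by omega)
    simp at this
    linarith
  -- Frobenius norm squared equals sum of squares of eigenvalues
  have hfrob : ∑ i, ∑ j, ‖A i j‖ ^ 2 = ∑ i, lam i ^ 2 := by
    have hkey2 := key 2
    have htr2 : (A ^ 2).trace = ((∑ i, ∑ j, ‖A i j‖ ^ 2 : ℝ) : ℂ) := by
      rw [pow_two]
      nth_rewrite 1 [← hA]
      rw [Matrix.trace]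
      push_cast
      simp only [Matrix.diag_apply, Matrix.mul_apply, Matrix.conjTranspose_apply]
      rw [Finset.sum_comm]
      congr 1; funext i; congr 1; funext j
      rw [Complex.star_def, RCLike.conj_mul]
      norm_cast
    rw [htr2] at hkey2
    exact_mod_cast hkey2
  -- case split
  by_cases hbig : ∃ i j, 1 ≤ ‖A i j‖
  · obtain ⟨i, j, hij⟩ := hbig
    have h1' : (1 : ℝ) ≤ ‖A i j‖ ^ α := Real.one_le_rpow hij hα0.le
    calc (1 : ℝ) ≤ ‖A i j‖ ^ α := h1'
      _ ≤ ∑ j', ‖A i j'‖ ^ α :=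
          Finset.single_le_sum (fun j' _ => Real.rpow_nonneg (norm_nonneg _) _) (mem_univ j)
      _ ≤ ∑ i', ∑ j', ‖A i' j'‖ ^ α :=
          Finset.single_le_sum
            (fun i' _ => Finset.sum_nonneg fun j' _ => Real.rpow_nonneg (norm_nonneg _) _)
            (mem_univ i)
  · push_neg at hbig
    have hterm : ∀ i j, ‖A i j‖ ^ 2 ≤ ‖A i j‖ ^ α := by
      intro i j
      rcases eq_or_lt_of_le (norm_nonneg (A i j)) with h0 | h0
      · rw [← h0, Real.zero_rpow hα0.ne']
        simp
      · have := Real.rpow_le_rpow_of_exponent_ge h0 (hbig i j).le hα2.le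
        calc ‖A i j‖ ^ 2 = ‖A i j‖ ^ (2 : ℝ) := by
              rw [← Real.rpow_natCast]; norm_num
          _ ≤ ‖A i j‖ ^ α := this
    calc (1 : ℝ) ≤ ∑ i, lam i ^ 2 := hsq
      _ = ∑ i, ∑ j, ‖A i j‖ ^ 2 := hfrob.symm
      _ ≤ ∑ i, ∑ j, ‖A i j‖ ^ α :=
          Finset.sum_le_sum fun i _ => Finset.sum_le_sum fun j _ => hterm i j
end
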